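/- arXiv:1611.03707 — 6 statements merged into one kernel-verified Lean document; each statement's English description precedes it below -/
import Mathlib

section
/- Let 1 ≤ r ≤ n be integers. The number of rook words a of length n with run(a) = r equals r! · Σ (n−1)^{e_1} · (n−2)^{e_2} ⋯ (n−r)^{e_r}, where the sum is over all r-tuples (e_1,…,e_r) of nonnegative integers with e_1 + ⋯ + e_r = n − r. -/
open Finset

noncomputable section
open scoped Classical

/-- `a : Fin n → Fin n` encodes a word `(a_1,…,a_n) ∈ {1,…,n}^n` via `a_i = (a i) + 1`
(i.e. the `Fin n` value is the 1-based letter minus one). -/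
def IsParkingFunction {n : ℕ} (a : Fin n → Fin n) : Prop :=
  ∀ i : Fin n, (i : ℕ) + 1 ≤ (Finset.univ.filter (fun j => a j ≤ i)).card

/-- `X = {x_1 < … < x_ℓ}` is centered for `a` iff `a_{x_i} ≤ i` for all `i`, i.e. the 1-based
value at `x` is at most the rank of `x` in `X`. -/
def Centered {n : ℕ} (a : Fin n → Fin n) (X : Finset (Fin n)) : Prop :=
  ∀ x ∈ X, (a x : ℕ) + 1 ≤ (X.filter (fun y => y ≤ x)).card

/-- `z(a)`: the maximum cardinality of a centered set for `a`. -/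
def zOf {n : ℕ} (a : Fin n → Fin n) : ℕ :=
  sSup {k : ℕ | ∃ X : Finset (Fin n), Centered a X ∧ X.card = k}

/-- `run(a)`: the largest `i` such that all 1-based values `1,…,i` occur in `a` (0 if none). -/
def runOf {n : ℕ} (a : Fin n → Fin n) : ℕ :=
  ((Finset.range n).filter (fun i => ∀ j ≤ i, ∃ x : Fin n, (a x : ℕ) = j)).card

/-- `Run(a)`: the set of positions `j` that are the last occurrence of some 1-based value
`≤ run(a)`. -/
def RunSet {n : ℕ} (a : Fin n → Fin n) : Finset (Fin n) :=
  Finset.univ.filter (fun j => (a j : ℕ) < runOf a ∧ ∀ j' : Fin n, j < j' → a j' ≠ a j)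

/-- A rook word: the first letter is at most `run(a)`. -/
def IsRookWord {n : ℕ} (a : Fin n → Fin n) : Prop :=
  ∃ h : 0 < n, (a ⟨0, h⟩ : ℕ) + 1 ≤ runOf a

/-- `LegEq T k` : depth-first search from `0`, always preferring the largest unvisited neighbour,
visits exactly `k` non-root vertices before the first backtracking. -/
def LegEq {n : ℕ} (T : SimpleGraph (Fin (n + 1))) (k : ℕ) : Prop :=
  ∃ v : Fin (k + 1) → Fin (n + 1),
    v 0 = 0 ∧
    (∀ i : Fin k,
      T.Adj (v i.castSucc) (v i.succ) ∧
      (∀ j : Fin (k + 1), j ≤ i.castSucc → v i.succ ≠ v j) ∧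
      (∀ w : Fin (n + 1), T.Adj (v i.castSucc) w →
        (∀ j : Fin (k + 1), j ≤ i.castSucc → w ≠ v j) → w ≤ v i.succ)) ∧
    (∀ w : Fin (n + 1), T.Adj (v (Fin.last k)) w → ∃ j : Fin (k + 1), w = v j)

/-- `Nbr [ℓ_1,…,ℓ_m]` is the number of tuples `(x_0,…,x_m)` with `x_0 = 0` and
`x_{i-1} < x_i ≤ ℓ_1 + ⋯ + ℓ_i` for all `i`. -/
def Nbr (L : List ℤ) : ℕ :=
  Nat.card {x : Fin (L.length + 1) → ℤ //
    x 0 = 0 ∧ ∀ i : Fin L.length,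
      x i.castSucc < x i.succ ∧ x i.succ ≤ (L.take ((i : ℕ) + 1)).sum}

/-- The cyclic sum `s(ℓ)` of the paper (indices of `ℓ` read modulo `k`). -/
def cycS (k r : ℕ) (t : ℤ) (ℓ : ℕ → ℕ) : ℕ :=
  ∑ i ∈ Finset.range k,
    Nbr (((∑ j ∈ Finset.range r, (ℓ ((i + j + 1) % k) : ℤ)) + t) ::
      List.ofFn (fun p : Fin (k - r - 1) => (ℓ ((i + r + 1 + (p : ℕ)) % k) : ℤ)))

/-- `B` is the coimage of `a`: the ordered partition of positions into fibers of `a`,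
ordered by increasing value. -/
def IsCoimage {n k : ℕ} (a : Fin n → Fin n) (B : Fin k → Finset (Fin n)) : Prop :=
  (∀ j, (B j).Nonempty) ∧
  (∀ x : Fin n, ∃ j, x ∈ B j) ∧
  (∀ j j' : Fin k, ∀ x ∈ B j, ∀ y ∈ B j', (a x = a y ↔ j = j')) ∧
  (∀ j j' : Fin k, ∀ x ∈ B j, ∀ y ∈ B j', j < j' → a x < a y)

/-- `a` is of type `𝔄` iff its coimage is a cyclic rotation of `𝔄`. -/
def IsOfType {n k : ℕ} (a : Fin n → Fin n) (A : Fin k → Finset (Fin n)) : Prop :=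
  ∃ s : ℕ, s < k ∧ IsCoimage a (fun j => A ⟨((j : ℕ) + s) % k, Nat.mod_lt _ j.pos⟩)


/-- Auxiliary recursive count. -/
private def Wc (N : ℕ) : ℕ → ℕ → ℕ
  | 0, s => if s = 0 then 1 else 0
  | m + 1, s => (N - s) * Wc N m s + s * Wc N m (s - 1)

/-- `hpoly f k q = Σ_{e : compositions of q into k parts} ∏ f i ^ e i`. -/
private def hpoly (f : ℕ → ℕ) (k q : ℕ) : ℕ :=
  ∑ e ∈ Finset.Nat.antidiagonalTuple k q, ∏ i : Fin k, f i ^ e i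

private lemma hpoly_zero (f : ℕ → ℕ) (k : ℕ) : hpoly f k 0 = 1 := by
  simp [hpoly, Finset.Nat.antidiagonalTuple_zero_right]

private lemma hpoly_zero_left (f : ℕ → ℕ) (q : ℕ) : hpoly f 0 (q + 1) = 0 := by
  simp [hpoly, Finset.Nat.antidiagonalTuple_zero_succ]

private lemma hpoly_succ (f : ℕ → ℕ) (k M : ℕ) :
    hpoly f (k + 1) M =
      ∑ j ∈ Finset.range (M + 1), f 0 ^ j * hpoly (fun i => f (i + 1)) k (M - j) := by
  simp only [hpoly, Finset.mul_sum]
  rw [Finset.sum_sigma']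
  refine Finset.sum_nbij' (fun e => ⟨e 0, Fin.tail e⟩) (fun p => Fin.cons p.1 p.2)
    ?_ ?_ ?_ ?_ ?_
  · intro e he
    simp only [Finset.Nat.mem_antidiagonalTuple, Fin.sum_univ_succ] at he
    simp only [Finset.mem_sigma, Finset.mem_range, Finset.Nat.mem_antidiagonalTuple]
    have ht : ∑ i : Fin k, Fin.tail e i = ∑ i : Fin k, e i.succ := rfl
    rw [ht]
    omega
  · rintro ⟨j, e⟩ hp
    simp only [Finset.mem_sigma, Finset.mem_range, Finset.Nat.mem_antidiagonalTuple] at hp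
    simp only [Finset.Nat.mem_antidiagonalTuple, Fin.sum_univ_succ, Fin.cons_zero,
      Fin.cons_succ]
    omega
  · intro e _; exact Fin.cons_self_tail e
  · rintro ⟨j, e⟩ _; simp [Fin.tail_cons]
  · intro e _
    rw [Fin.prod_univ_succ]
    simp [Fin.tail]

private lemma hpoly_rec (f : ℕ → ℕ) (k q : ℕ) :
    hpoly f (k + 1) (q + 1) =
      hpoly (fun i => f (i + 1)) k (q + 1) + f 0 * hpoly f (k + 1) q := by
  rw [hpoly_succ f k (q + 1), Finset.sum_range_succ' _ (q + 1), hpoly_succ f k q,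
    Finset.mul_sum]
  simp only [pow_zero, one_mul, Nat.sub_zero, Nat.succ_sub_succ, pow_succ]
  rw [add_comm]
  congr 1
  apply Finset.sum_congr rfl
  intro x _
  ring

private lemma hpoly_one (f : ℕ → ℕ) (q : ℕ) : hpoly f 1 q = f 0 ^ q := by
  simp [hpoly, Finset.Nat.antidiagonalTuple_one]

private lemma Wc_eq_zero (N : ℕ) : ∀ m s, m < s → Wc N m s = 0 := by
  intro m
  induction m with
  | zero => intro s hs; simp [Wc]; omega
  | succ m ih =>
    intro s hs
    simp only [Wc]
    rw [ih s (by omega), ih (s - 1) (by omega)]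
    simp

private lemma Wc_eq (N : ℕ) : ∀ m s, s ≤ m → s ≤ N →
    Wc N m s = s.factorial * hpoly (fun i => N - s + i) (s + 1) (m - s) := by
  intro m
  induction m with
  | zero =>
    intro s hs _
    interval_cases s
    simp [Wc, hpoly_zero]
  | succ m ih =>
    intro s hs hsN
    rcases Nat.lt_or_ge m s with hms | hms
    · -- s = m + 1
      have hsm : s = m + 1 := by omega
      subst hsm
      simp only [Wc, Nat.add_sub_cancel]
      rw [Wc_eq_zero N m (m + 1) (by omega), ih m (by omega) (by omega)]
      simp [hpoly_zero, Nat.factorial_succ, Nat.mul_comm]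
    · -- s ≤ m
      rcases Nat.eq_zero_or_pos s with rfl | hspos
      · simp only [Wc]
        rw [ih 0 (by omega) (by omega)]
        simp only [Nat.sub_zero, Nat.factorial_zero, one_mul, Nat.zero_mul, Nat.add_zero,
          Nat.mul_zero, add_zero]
        rw [hpoly_one, hpoly_one]
        simp only [Nat.add_zero]
        rw [pow_succ, Nat.mul_comm]
      · simp only [Wc]
        rw [ih s hms hsN, ih (s - 1) (by omega) (by omega)]
        have h1 : m + 1 - s = (m - s) + 1 := by omega
        have h2 : m - (s - 1) = (m - s) + 1 := by omega
        have h3 : (fun i => N - (s - 1) + i) = (fun i : ℕ => N - s + (i + 1)) := by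
          funext i; omega
        have h4 : s - 1 + 1 = s := by omega
        rw [h1, h2, h3, h4, hpoly_rec]
        simp only [Nat.add_zero]
        have h6 : s * ((s-1).factorial * hpoly (fun i : ℕ => N - s + (i+1)) s (m - s + 1)) =
            s.factorial * hpoly (fun i : ℕ => N - s + (i + 1)) s (m - s + 1) := by
          rw [← Nat.mul_assoc, Nat.mul_factorial_pred hspos.ne']
        rw [h6]
        ring

/-- Number of words of length `m` over letters in `Γ` that contain every letter of `T`. -/
private def cnt {α : Type} [Fintype α] [DecidableEq α] (Γ T : Finset α) (m : ℕ) : ℕ :=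
  (Finset.univ.filter fun l : Fin m → α =>
    (∀ i, l i ∈ Γ) ∧ ∀ t ∈ T, ∃ i, l i = t).card

private lemma cnt_fiber {α : Type} [Fintype α] [DecidableEq α] (Γ T : Finset α) (m : ℕ)
    (c : α) (hc : c ∈ Γ) :
    (Finset.univ.filter fun l : Fin (m + 1) → α =>
      ((∀ i, l i ∈ Γ) ∧ ∀ t ∈ T, ∃ i, l i = t) ∧ l 0 = c).card = cnt Γ (T.erase c) m := by
  refine Finset.card_nbij' (fun l => Fin.tail l) (fun l => Fin.cons c l) ?_ ?_ ?_ ?_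
  · intro l hl
    simp only [Finset.mem_coe, Finset.mem_filter, Finset.mem_univ, true_and] at hl ⊢
    obtain ⟨⟨hΓ, hT⟩, h0⟩ := hl
    refine ⟨fun i => hΓ i.succ, fun t ht => ?_⟩
    rw [Finset.mem_erase] at ht
    obtain ⟨x, hx⟩ := hT t ht.2
    rcases Fin.eq_zero_or_eq_succ x with rfl | ⟨i, rfl⟩
    · rw [h0] at hx
      exact absurd hx.symm ht.1
    · exact ⟨i, hx⟩
  · intro l hl
    simp only [Finset.mem_coe, Finset.mem_filter, Finset.mem_univ, true_and] at hl ⊢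
    obtain ⟨hΓ, hT⟩ := hl
    refine ⟨⟨fun i => ?_, fun t ht => ?_⟩, Fin.cons_zero _ _⟩
    · rcases Fin.eq_zero_or_eq_succ i with rfl | ⟨j, rfl⟩
      · simpa using hc
      · simpa using hΓ j
    · by_cases htc : t = c
      · exact ⟨0, by simp [htc]⟩
      · obtain ⟨i, hi⟩ := hT t (Finset.mem_erase.mpr ⟨htc, ht⟩)
        exact ⟨i.succ, by simpa using hi⟩
  · intro l hl
    simp only [Finset.mem_coe, Finset.mem_filter] at hl
    rw [← hl.2.2]
    exact Fin.cons_self_tail l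
  · intro l _
    exact Fin.tail_cons _ _

private lemma cnt_eq {α : Type} [Fintype α] [DecidableEq α] (Γ : Finset α) :
    ∀ (m : ℕ) (T : Finset α), T ⊆ Γ → cnt Γ T m = Wc Γ.card m T.card := by
  intro m
  induction m with
  | zero =>
    intro T _
    rcases T.eq_empty_or_nonempty with rfl | ⟨t, ht⟩
    · simp only [cnt, Wc, Finset.card_empty, if_pos rfl]
      rw [Finset.filter_true_of_mem, Finset.card_univ]
      · simp
      · intro l _
        exact ⟨fun i => i.elim0, fun t ht => by simp at ht⟩
    · simp only [cnt, Wc, if_neg (Finset.card_ne_zero_of_mem ht)]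
      rw [Finset.filter_false_of_mem, Finset.card_empty]
      intro l _ hl
      obtain ⟨i, _⟩ := hl.2 t ht
      exact i.elim0
  | succ m ih =>
    intro T hT
    have key : cnt Γ T (m + 1) = ∑ c ∈ Γ, cnt Γ (T.erase c) m := by
      rw [cnt, Finset.card_eq_sum_card_fiberwise (f := fun l : Fin (m+1) → α => l 0) (t := Γ)
        (fun l hl => (Finset.mem_filter.mp hl).2.1 0)]
      refine Finset.sum_congr rfl fun c hc => ?_
      rw [← cnt_fiber Γ T m c hc]
      congr 1
      ext l
      simp only [Finset.mem_filter, Finset.mem_univ, true_and, and_assoc]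
    rw [key]
    have split : ∑ c ∈ Γ, cnt Γ (T.erase c) m =
        (∑ c ∈ Γ \ T, cnt Γ (T.erase c) m) + ∑ c ∈ T, cnt Γ (T.erase c) m :=
      (Finset.sum_sdiff hT).symm
    rw [split]
    have h1 : ∀ c ∈ Γ \ T, cnt Γ (T.erase c) m = Wc Γ.card m T.card := by
      intro c hcm
      rw [Finset.erase_eq_of_notMem (Finset.mem_sdiff.mp hcm).2]
      exact ih T hT
    have h2 : ∀ c ∈ T, cnt Γ (T.erase c) m = Wc Γ.card m (T.card - 1) := by
      intro c hcm
      rw [ih (T.erase c) ((Finset.erase_subset _ _).trans hT),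
        Finset.card_erase_of_mem hcm]
    rw [Finset.sum_congr rfl h1, Finset.sum_congr rfl h2, Finset.sum_const, Finset.sum_const,
      Finset.card_sdiff_of_subset hT, smul_eq_mul, smul_eq_mul]
    simp [Wc]

private lemma hpoly_rev (f g : ℕ → ℕ) (k q : ℕ) (h : ∀ i : Fin k, f i = g (Fin.rev i)) :
    hpoly f k q = hpoly g k q := by
  unfold hpoly
  refine Finset.sum_nbij' (fun e => e ∘ Fin.rev) (fun e => e ∘ Fin.rev) ?_ ?_ ?_ ?_ ?_
  · intro e he
    simp only [Finset.Nat.mem_antidiagonalTuple] at he ⊢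
    rw [← he]
    exact Fintype.sum_equiv Fin.revPerm _ _ (fun i => rfl)
  · intro e he
    simp only [Finset.Nat.mem_antidiagonalTuple] at he ⊢
    rw [← he]
    exact Fintype.sum_equiv Fin.revPerm _ _ (fun i => rfl)
  · intro e _; funext i; simp [Fin.rev_rev]
  · intro e _; funext i; simp [Fin.rev_rev]
  · intro e _
    refine Fintype.prod_equiv Fin.revPerm _ _ (fun i => ?_)
    simp only [Function.comp_apply, Fin.revPerm_apply, Fin.rev_rev]
    rw [h i]

private lemma runOf_eq_iff {n r : ℕ} (a : Fin n → Fin n) (hr : 1 ≤ r) (hrn : r ≤ n) :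
    runOf a = r ↔
      (∀ j < r, ∃ x : Fin n, (a x : ℕ) = j) ∧ ∀ x : Fin n, (a x : ℕ) ≠ r := by
  constructor
  · intro h
    unfold runOf at h
    set s := (Finset.range n).filter (fun i => ∀ j ≤ i, ∃ x : Fin n, (a x : ℕ) = j) with hs
    have hne : s.Nonempty := Finset.card_pos.mp (by omega)
    set I := s.max' hne with hI
    have hImem : I ∈ s := s.max'_mem hne
    have hIn : I < n := Finset.mem_range.mp (Finset.mem_filter.mp hImem).1
    have hIP : ∀ j ≤ I, ∃ x : Fin n, (a x : ℕ) = j := (Finset.mem_filter.mp hImem).2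
    have hseq : s = Finset.range (I + 1) := by
      ext i
      simp only [hs, Finset.mem_filter, Finset.mem_range]
      constructor
      · intro ⟨hin, hPi⟩
        have hle := Finset.le_max' s i
          (Finset.mem_filter.mpr ⟨Finset.mem_range.mpr (by omega), hPi⟩)
        rw [← hI] at hle
        omega
      · intro hi
        exact ⟨by omega, fun j hj => hIP j (by omega)⟩
    rw [hseq, Finset.card_range] at h
    have hIr : I = r - 1 := by omega
    constructor
    · intro j hj
      exact hIP j (by omega)
    · intro x hx
      have hrn' : r < n := by
        have := x.isLt
        have := (a x).isLt
        omega
      have hrs : r ∈ s := by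
        refine Finset.mem_filter.mpr ⟨Finset.mem_range.mpr hrn', fun j hj => ?_⟩
        rcases Nat.lt_or_ge j r with hjr | hjr
        · exact hIP j (by omega)
        · exact ⟨x, by omega⟩
      have hle := Finset.le_max' s r hrs
      rw [← hI] at hle
      omega
  · intro ⟨h1, h2⟩
    unfold runOf
    have hseq : (Finset.range n).filter (fun i => ∀ j ≤ i, ∃ x : Fin n, (a x : ℕ) = j) =
        Finset.range r := by
      ext i
      simp only [Finset.mem_filter, Finset.mem_range]
      constructor
      · intro ⟨hin, hPi⟩
        by_contra hir
        obtain ⟨x, hx⟩ := hPi r (by omega)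
        exact h2 x hx
      · intro hi
        exact ⟨by omega, fun j hj => h1 j (by omega)⟩
    rw [hseq, Finset.card_range]

theorem rw_run_count_compositions (n r : ℕ) (hr : 1 ≤ r) (hrn : r ≤ n) :
    Nat.card {a : Fin n → Fin n // IsRookWord a ∧ runOf a = r} =
    r.factorial * ∑ e ∈ Finset.Nat.antidiagonalTuple r (n - r),
      ∏ i : Fin r, (n - 1 - (i : ℕ)) ^ e i := by
  obtain ⟨m, rfl⟩ : ∃ m, n = m + 1 := ⟨n - 1, by omega⟩
  set Γ : Finset (Fin (m + 1)) := Finset.univ.filter (fun c => (c : ℕ) ≠ r) with hGdef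
  set T0 : Finset (Fin (m + 1)) := Finset.univ.filter (fun c => (c : ℕ) < r) with hT0def
  have hmemG : ∀ c : Fin (m + 1), c ∈ Γ ↔ (c : ℕ) ≠ r := by
    intro c; simp [hGdef]
  have hmemT0 : ∀ c : Fin (m + 1), c ∈ T0 ↔ (c : ℕ) < r := by
    intro c; simp [hT0def]
  have hT0sub : T0 ⊆ Γ := fun c hc => (hmemG c).mpr (by
    have := (hmemT0 c).mp hc; omega)
  have hT0card : T0.card = r := by
    rw [show r = (Finset.range r).card from (Finset.card_range r).symm]
    refine Finset.card_nbij' (fun c => (c : ℕ))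
      (fun j => (⟨j % (m + 1), Nat.mod_lt _ (Nat.succ_pos m)⟩ : Fin (m + 1)))
      ?_ ?_ ?_ ?_
    · intro c hc
      rw [Finset.mem_coe, Finset.mem_range]
      exact (hmemT0 c).mp hc
    · intro j hj
      rw [Finset.mem_coe, Finset.mem_range] at hj
      refine (hmemT0 _).mpr ?_
      simp only
      rw [Nat.mod_eq_of_lt (by omega)]
      exact hj
    · intro c _
      exact Fin.ext (by simp [Nat.mod_eq_of_lt c.isLt])
    · intro j hj
      rw [Finset.mem_coe, Finset.mem_range] at hj
      simp [Nat.mod_eq_of_lt (show j < m + 1 by omega)]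
  have hNge : r ≤ Γ.card := hT0card ▸ Finset.card_le_card hT0sub
  have hGm : r ≤ m → Γ.card = m := by
    intro hrm
    have : Γ = Finset.univ.erase (⟨r, by omega⟩ : Fin (m + 1)) := by
      ext c
      rw [hmemG c, Finset.mem_erase]
      simp [Fin.ext_iff]
    rw [this, Finset.card_erase_of_mem (Finset.mem_univ _), Finset.card_univ,
      Fintype.card_fin]
    omega
  have hpred : ∀ a : Fin (m + 1) → Fin (m + 1),
      (IsRookWord a ∧ runOf a = r) ↔
      ((∀ i, a i ∈ Γ) ∧ ∀ t ∈ T0, ∃ x, a x = t) ∧ a 0 ∈ T0 := by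
    intro a
    constructor
    · rintro ⟨⟨hpos, hlen⟩, hrun⟩
      obtain ⟨h1, h2⟩ := (runOf_eq_iff a hr hrn).mp hrun
      have h0 : (⟨0, hpos⟩ : Fin (m + 1)) = 0 := rfl
      rw [h0, hrun] at hlen
      refine ⟨⟨fun i => (hmemG _).mpr (h2 i), fun t ht => ?_⟩, (hmemT0 _).mpr (by omega)⟩
      obtain ⟨x, hx⟩ := h1 (t : ℕ) ((hmemT0 t).mp ht)
      exact ⟨x, Fin.ext hx⟩
    · rintro ⟨⟨hGa, hTa⟩, h0⟩
      have h1 : ∀ j < r, ∃ x, ((a x : ℕ)) = j := by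
        intro j hj
        obtain ⟨x, hx⟩ := hTa (⟨j, by omega⟩ : Fin (m + 1))
          ((hmemT0 _).mpr (by simpa using hj))
        exact ⟨x, by rw [hx]⟩
      have hrun : runOf a = r :=
        (runOf_eq_iff a hr hrn).mpr ⟨h1, fun x => (hmemG _).mp (hGa x)⟩
      refine ⟨⟨Nat.succ_pos m, ?_⟩, hrun⟩
      have h00 : (⟨0, Nat.succ_pos m⟩ : Fin (m + 1)) = 0 := rfl
      rw [h00, hrun]
      have := (hmemT0 _).mp h0
      omega
  have hcard : Nat.card {a : Fin (m + 1) → Fin (m + 1) // IsRookWord a ∧ runOf a = r}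
      = (Finset.univ.filter fun a : Fin (m + 1) → Fin (m + 1) =>
          ((∀ i, a i ∈ Γ) ∧ ∀ t ∈ T0, ∃ x, a x = t) ∧ a 0 ∈ T0).card := by
    rw [Nat.card_eq_fintype_card, Fintype.card_subtype]
    congr 1
    ext a
    simp only [Finset.mem_filter, Finset.mem_univ, true_and]
    exact hpred a
  rw [hcard]
  clear hcard hpred
  have hfib : (Finset.univ.filter fun a : Fin (m + 1) → Fin (m + 1) =>
      ((∀ i, a i ∈ Γ) ∧ ∀ t ∈ T0, ∃ x, a x = t) ∧ a 0 ∈ T0).card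
      = ∑ c ∈ T0, cnt Γ (T0.erase c) m := by
    rw [Finset.card_eq_sum_card_fiberwise
      (f := fun a : Fin (m + 1) → Fin (m + 1) => a 0) (t := T0)
      (fun a ha => (Finset.mem_filter.mp ha).2.2)]
    refine Finset.sum_congr rfl fun c hc => ?_
    rw [← cnt_fiber Γ T0 m c (hT0sub hc)]
    congr 1
    ext a
    simp only [Finset.mem_filter, Finset.mem_univ, true_and]
    constructor
    · rintro ⟨⟨hx, _⟩, h0⟩
      exact ⟨hx, h0⟩
    · rintro ⟨hx, h0⟩
      exact ⟨⟨hx, h0 ▸ hc⟩, h0⟩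
  rw [hfib]
  clear hfib
  have hcnt : ∀ c ∈ T0, cnt Γ (T0.erase c) m = Wc Γ.card m (r - 1) := by
    intro c hc
    rw [cnt_eq Γ m (T0.erase c) ((Finset.erase_subset _ _).trans hT0sub),
      Finset.card_erase_of_mem hc, hT0card]
  rw [Finset.sum_congr rfl hcnt, Finset.sum_const, hT0card, smul_eq_mul]
  have ha1 : r - 1 ≤ m := by omega
  have ha2 : r - 1 ≤ Γ.card := by omega
  rw [Wc_eq Γ.card m (r - 1) ha1 ha2]
  have hidx1 : r - 1 + 1 = r := by omega
  have hidx2 : m - (r - 1) = m + 1 - r := by omega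
  rw [hidx1, hidx2, ← Nat.mul_assoc, Nat.mul_factorial_pred (by omega : r ≠ 0)]
  have hfinal : hpoly (fun i => Γ.card - (r - 1) + i) r (m + 1 - r) =
      hpoly (fun i => m + 1 - 1 - i) r (m + 1 - r) := by
    rcases Nat.lt_or_ge m (r) with hmr | hmr
    · have : m + 1 - r = 0 := by omega
      rw [this, hpoly_zero, hpoly_zero]
    · refine hpoly_rev _ _ r (m + 1 - r) (fun i => ?_)
      rw [hGm hmr, Fin.val_rev]
      have := i.isLt
      omega
  rw [hfinal]
  rfl

end
end

section
/- Let 1 ≤ r ≤ n be integers. Then r! · Σ (n−1)^{e_1} · (n−2)^{e_2} ⋯ (n−r)^{e_r} = r · Σ_{j=0}^{r-1} (−1)^j · binom(r−1, j) · (n−1−j)^{n−1}, where the first sum is over all r-tuples (e_1,…,e_r) of nonnegative integers with e_1 + ⋯ + e_r = n − r. -/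
open Finset

noncomputable section
open scoped Classical

def Hsum {r : ℕ} (x : Fin r → ℤ) (m : ℕ) : ℤ :=
  ∑ e ∈ Finset.Nat.antidiagonalTuple r m, ∏ i, x i ^ e i

lemma Hsum_perm {r : ℕ} (x : Fin r → ℤ) (σ : Equiv.Perm (Fin r)) (m : ℕ) :
    Hsum (x ∘ σ) m = Hsum x m := by
  unfold Hsum
  refine Finset.sum_nbij' (fun e => e ∘ σ.symm) (fun e => e ∘ σ) ?_ ?_ ?_ ?_ ?_
  · intro e he
    rw [Finset.Nat.mem_antidiagonalTuple] at he ⊢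
    rw [← he]
    exact Equiv.sum_comp σ.symm e
  · intro e he
    rw [Finset.Nat.mem_antidiagonalTuple] at he ⊢
    rw [← he]
    exact Equiv.sum_comp σ e
  · intro e _; funext i; simp
  · intro e _; funext i; simp
  · intro e _
    rw [← Equiv.prod_comp σ (fun i => x i ^ (e ∘ σ.symm) i)]
    simp

lemma Hsum_succ_left {r : ℕ} (x : Fin (r + 1) → ℤ) (m : ℕ) :
    Hsum x (m + 1) = x 0 * Hsum x m + Hsum (x ∘ Fin.succ) (m + 1) := by
  have hA : ∑ e ∈ (Finset.Nat.antidiagonalTuple (r + 1) (m + 1)).filter (fun e => e 0 = 0),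
        ∏ i, x i ^ e i =
      ∑ e ∈ Finset.Nat.antidiagonalTuple r (m + 1), ∏ i, (x ∘ Fin.succ) i ^ e i := by
    refine Finset.sum_nbij' (fun e => e ∘ Fin.succ) (fun e => Fin.cons 0 e) ?_ ?_ ?_ ?_ ?_
    · intro e he
      simp only [Finset.mem_filter, Finset.Nat.mem_antidiagonalTuple] at he ⊢
      obtain ⟨hs, h0⟩ := he
      rw [Fin.sum_univ_succ, h0, zero_add] at hs
      exact hs
    · intro e he
      simp only [Finset.mem_filter, Finset.Nat.mem_antidiagonalTuple] at he ⊢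
      constructor
      · rw [Fin.sum_univ_succ]; simpa using he
      · simp
    · intro e he
      simp only [Finset.mem_filter] at he
      funext i
      refine Fin.cases ?_ ?_ i
      · simp [he.2]
      · intro j; simp
    · intro e _; funext i; simp
    · intro e he
      simp only [Finset.mem_filter] at he
      rw [Fin.prod_univ_succ, he.2]
      simp
  have hB : ∑ e ∈ (Finset.Nat.antidiagonalTuple (r + 1) (m + 1)).filter (fun e => ¬ e 0 = 0),
        ∏ i, x i ^ e i =
      x 0 * ∑ e ∈ Finset.Nat.antidiagonalTuple (r + 1) m, ∏ i, x i ^ e i := by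
    rw [Finset.mul_sum]
    refine Finset.sum_nbij' (fun e => Fin.cons (e 0 - 1) (e ∘ Fin.succ))
      (fun e => Fin.cons (e 0 + 1) (e ∘ Fin.succ)) ?_ ?_ ?_ ?_ ?_
    · intro e he
      simp only [Finset.mem_filter, Finset.Nat.mem_antidiagonalTuple] at he ⊢
      obtain ⟨hs, h0⟩ := he
      rw [Fin.sum_univ_succ] at hs
      rw [Fin.sum_univ_succ, Fin.cons_zero]
      simp only [Fin.cons_succ, Function.comp_apply]
      clear hA x
      omega
    · intro e he
      simp only [Finset.mem_filter, Finset.Nat.mem_antidiagonalTuple] at he ⊢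
      rw [Fin.sum_univ_succ] at he
      constructor
      · rw [Fin.sum_univ_succ, Fin.cons_zero]
        simp only [Fin.cons_succ, Function.comp_apply]
        clear hA x
        omega
      · simp
    · intro e he
      simp only [Finset.mem_filter, Finset.Nat.mem_antidiagonalTuple] at he
      obtain ⟨hs, h0⟩ := he
      funext i
      refine Fin.cases ?_ ?_ i
      · simp only [Fin.cons_succ, Function.comp_apply, Fin.cons_zero]
        clear hA x hs
        omega
      · intro j
        simp [Fin.cons_succ]
    · intro e _
      funext i
      refine Fin.cases ?_ ?_ i
      · simp only [Fin.cons_succ, Function.comp_apply, Fin.cons_zero]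
        clear hA x
        omega
      · intro j
        simp [Fin.cons_succ]
    · intro e he
      simp only [Finset.mem_filter, Finset.Nat.mem_antidiagonalTuple] at he
      rw [Fin.prod_univ_succ, Fin.prod_univ_succ, Fin.cons_zero]
      simp only [Fin.cons_succ, Function.comp_apply]
      rw [← mul_assoc, ← pow_succ']
      congr 2
      clear hA x
      omega
  unfold Hsum
  rw [← Finset.sum_filter_add_sum_filter_not
    (Finset.Nat.antidiagonalTuple (r + 1) (m + 1)) (fun e => e 0 = 0), hA, hB]
  ring

lemma Hsum_succ_right {r : ℕ} (x : Fin (r + 1) → ℤ) (m : ℕ) :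
    Hsum x (m + 1) = x (Fin.last r) * Hsum x m + Hsum (x ∘ Fin.castSucc) (m + 1) := by
  have hrev : ∀ k, Hsum (x ∘ Fin.revPerm) k = Hsum x k := fun k => Hsum_perm x Fin.revPerm k
  have h := Hsum_succ_left (x ∘ Fin.revPerm) m
  rw [hrev, hrev] at h
  have h0 : (x ∘ Fin.revPerm) 0 = x (Fin.last r) := by
    simp [Fin.rev_zero]
  have hcomp : (x ∘ Fin.revPerm) ∘ Fin.succ = (x ∘ Fin.castSucc) ∘ Fin.revPerm := by
    funext i
    simp only [Function.comp_apply, Fin.revPerm_apply, Fin.rev_succ]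
  rw [h0, hcomp, Hsum_perm (x ∘ Fin.castSucc) Fin.revPerm] at h
  exact h


lemma alt_step (r : ℕ) (c : ℤ) (M : ℕ) :
    ∑ j ∈ Finset.range (r + 2), (-1 : ℤ) ^ j * ((r + 1).choose j : ℤ) * (c - j) ^ M =
      (∑ j ∈ Finset.range (r + 1), (-1 : ℤ) ^ j * (r.choose j : ℤ) * (c - j) ^ M) -
        ∑ j ∈ Finset.range (r + 1), (-1 : ℤ) ^ j * (r.choose j : ℤ) * (c - 1 - j) ^ M := by
  rw [Finset.sum_range_succ']
  have hg : ∀ j ∈ Finset.range (r + 1),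
      (-1 : ℤ) ^ (j + 1) * ((r + 1).choose (j + 1) : ℤ) * (c - (j + 1 : ℕ)) ^ M =
        (-((-1 : ℤ) ^ j * (r.choose j : ℤ) * (c - 1 - j) ^ M)) +
          (-1 : ℤ) ^ (j + 1) * (r.choose (j + 1) : ℤ) * (c - 1 - j) ^ M := by
    intro j _
    have : ((r + 1).choose (j + 1) : ℤ) = (r.choose j : ℤ) + (r.choose (j + 1) : ℤ) := by
      rw [Nat.choose_succ_succ]; push_cast; ring
    rw [this]
    have h2 : (c - ((j : ℕ) + 1 : ℕ)) = c - 1 - j := by push_cast; ring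
    rw [h2]; ring
  rw [Finset.sum_congr rfl hg, Finset.sum_add_distrib]
  have h3 : ∑ j ∈ Finset.range (r + 1),
      (-1 : ℤ) ^ (j + 1) * (r.choose (j + 1) : ℤ) * (c - 1 - j) ^ M =
      ∑ j ∈ Finset.range r, (-1 : ℤ) ^ (j + 1) * (r.choose (j + 1) : ℤ) * (c - 1 - j) ^ M := by
    rw [Finset.sum_range_succ, Nat.choose_succ_self]; simp
  have h4 : ∑ j ∈ Finset.range (r + 1), (-1 : ℤ) ^ j * (r.choose j : ℤ) * (c - j) ^ M =
      (∑ j ∈ Finset.range r, (-1 : ℤ) ^ (j + 1) * (r.choose (j + 1) : ℤ) * (c - 1 - j) ^ M)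
        + c ^ M := by
    rw [Finset.sum_range_succ']
    simp only [Nat.cast_zero, sub_zero, pow_zero, Nat.choose_zero_right, Nat.cast_one, one_mul,
      mul_one]
    congr 1
    refine Finset.sum_congr rfl fun j _ => ?_
    have h2 : (c - ((j : ℕ) + 1 : ℕ)) = c - 1 - j := by push_cast; ring
    rw [h2]
  rw [h3, Finset.sum_neg_distrib, h4]
  simp only [Nat.choose_zero_right, Nat.cast_zero, Nat.cast_one, sub_zero, pow_zero, one_mul,
    mul_one]
  ring

lemma Hsum_key (r : ℕ) : ∀ (c : ℤ) (m : ℕ),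
    (r.factorial : ℤ) * Hsum (fun i : Fin (r + 1) => c - (i : ℕ)) m =
      ∑ j ∈ Finset.range (r + 1), (-1 : ℤ) ^ j * (r.choose j : ℤ) * (c - (j : ℕ)) ^ (m + r) := by
  induction r with
  | zero =>
    intro c m
    simp only [Nat.factorial_zero, Nat.cast_one, one_mul, Finset.sum_range_one, pow_zero,
      Nat.choose_self, Nat.cast_zero, sub_zero, add_zero]
    unfold Hsum
    rw [Finset.Nat.antidiagonalTuple_one, Finset.sum_singleton, Fin.prod_univ_one]
    simp
  | succ r ih =>
    intro c m
    have hM : m + (r + 1) = m + 1 + r := by omega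
    rw [alt_step r c (m + (r + 1)), hM]
    have hcast : (fun i : Fin (r + 1) => c - ((i : ℕ) : ℤ)) =
        (fun i : Fin (r + 2) => c - ((i : ℕ) : ℤ)) ∘ Fin.castSucc := by
      funext i; simp
    have hsucc : (fun i : Fin (r + 1) => (c - 1) - ((i : ℕ) : ℤ)) =
        (fun i : Fin (r + 2) => c - ((i : ℕ) : ℤ)) ∘ Fin.succ := by
      funext i
      simp only [Function.comp_apply, Fin.val_succ]
      push_cast
      ring
    have h1 := Hsum_succ_left (fun i : Fin (r + 2) => c - ((i : ℕ) : ℤ)) m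
    have h2 := Hsum_succ_right (fun i : Fin (r + 2) => c - ((i : ℕ) : ℤ)) m
    have hIH1 := ih c (m + 1)
    have hIH2 := ih (c - 1) (m + 1)
    rw [← hIH1, ← hIH2, hcast, hsucc]
    rw [← hsucc] at h1
    rw [← hcast] at h2
    have hlast : ((Fin.last (r + 1) : Fin (r + 2)) : ℕ) = r + 1 := rfl
    simp only [Fin.val_zero, Nat.cast_zero, sub_zero, hlast] at h1 h2
    have hfac : ((r + 1).factorial : ℤ) = (r + 1) * (r.factorial : ℤ) := by
      rw [Nat.factorial_succ]; push_cast; ring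
    rw [hfac]
    rw [hcast] at h2
    rw [hsucc] at h1
    -- h1 : Hsum x (m+1) = c * Hsum x m + Hsum (x ∘ succ) (m+1)
    -- h2 : Hsum x (m+1) = (c - (r+1)) * Hsum x m + Hsum (x ∘ castSucc) (m+1)
    push_cast at h2 ⊢
    linear_combination (r.factorial : ℤ) * (h2 - h1)


theorem compositions_eq_alternating (n r : ℕ) (hr : 1 ≤ r) (hrn : r ≤ n) :
    ((r.factorial * ∑ e ∈ Finset.Nat.antidiagonalTuple r (n - r),
        ∏ i : Fin r, (n - 1 - (i : ℕ)) ^ e i : ℕ) : ℤ) =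
    (r : ℤ) * ∑ j ∈ Finset.range r,
      (-1 : ℤ) ^ j * ((r - 1).choose j : ℤ) * ((n : ℤ) - 1 - (j : ℤ)) ^ (n - 1) := by
  obtain ⟨R, rfl⟩ : ∃ R, r = R + 1 := ⟨r - 1, by omega⟩
  have hcast : ∀ i : Fin (R + 1), ((n - 1 - (i : ℕ) : ℕ) : ℤ) = (n : ℤ) - 1 - ((i : ℕ) : ℤ) := by
    intro i
    have h1 : (i : ℕ) ≤ n - 1 := by have := i.isLt; omega
    have h2 : 1 ≤ n := by omega
    rw [Nat.cast_sub h1, Nat.cast_sub h2]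
    simp
  have key := Hsum_key R ((n : ℤ) - 1) (n - (R + 1))
  have hexp : n - (R + 1) + R = n - 1 := by omega
  rw [hexp] at key
  have hL : ((∑ e ∈ Finset.Nat.antidiagonalTuple (R + 1) (n - (R + 1)),
        ∏ i : Fin (R + 1), (n - 1 - (i : ℕ)) ^ e i : ℕ) : ℤ) =
      Hsum (fun i : Fin (R + 1) => ((n : ℤ) - 1) - ((i : ℕ) : ℤ)) (n - (R + 1)) := by
    unfold Hsum
    push_cast
    refine Finset.sum_congr rfl fun e _ => Finset.prod_congr rfl fun i _ => ?_
    rw [hcast i]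
  have hR : ∀ j ∈ Finset.range (R + 1),
      (-1 : ℤ) ^ j * (((R + 1 - 1).choose j : ℕ) : ℤ) * ((n : ℤ) - 1 - (j : ℤ)) ^ (n - 1) =
      (-1 : ℤ) ^ j * ((R.choose j : ℕ) : ℤ) * (((n : ℤ) - 1) - ((j : ℕ) : ℤ)) ^ (n - 1) := by
    intro j _
    norm_num
  rw [Finset.sum_congr rfl hR]
  rw [← key, Nat.cast_mul, hL]
  rw [Nat.factorial_succ]
  push_cast
  ring

end
end

section
/- Let n ≥ 1. There exists a bijection Φ from {1,…,n}^n onto itself such that: (i) for every a ∈ {1,…,n}^n, the set Run(Φ(a)) is centered for a and every set centered for a has cardinality at most |Run(Φ(a))| (in particular run(Φ(a)) = z(a)); and (ii) Φ maps the set of parking functions of length n onto itself. -/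
open Finset

noncomputable section
open scoped Classical

namespace CRB

variable {n : ℕ}

lemma runOf_le (b : Fin n → Fin n) : runOf b ≤ n := by
  classical
  calc ((Finset.range n).filter _).card ≤ (Finset.range n).card := Finset.card_filter_le _ _
  _ = n := Finset.card_range n

lemma mem_run_filter_iff (b : Fin n → Fin n) {k : ℕ} :
    k ∈ (Finset.range n).filter (fun i => ∀ j ≤ i, ∃ x : Fin n, (b x : ℕ) = j) ↔
      k < runOf b := by
  classical
  set F := (Finset.range n).filter (fun i => ∀ j ≤ i, ∃ x : Fin n, (b x : ℕ) = j) with hF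
  constructor
  · intro hk
    have hsub : Finset.range (k + 1) ⊆ F := by
      intro j hj
      rw [Finset.mem_range] at hj
      rw [hF, Finset.mem_filter] at hk ⊢
      refine ⟨Finset.mem_range.2 (lt_of_le_of_lt (by omega) (Finset.mem_range.1 hk.1)), ?_⟩
      intro j' hj'
      exact hk.2 j' (by omega)
    have := Finset.card_le_card hsub
    simpa [runOf] using this.trans_eq rfl
  · intro hk
    by_contra hkn
    have hsub : F ⊆ Finset.range k := by
      intro i hi
      rw [Finset.mem_range]
      by_contra hik
      apply hkn
      rw [hF, Finset.mem_filter] at hi ⊢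
      exact ⟨Finset.mem_range.2 (lt_of_le_of_lt (by omega) (Finset.mem_range.1 hi.1)),
        fun j hj => hi.2 j (by omega)⟩
    have := Finset.card_le_card hsub
    simp only [Finset.card_range] at this
    have : runOf b ≤ k := by simpa [runOf] using this
    omega

lemma exists_eq_of_lt_run (b : Fin n → Fin n) {u : ℕ} (hu : u < runOf b) :
    ∃ x, (b x : ℕ) = u := by
  have := (mem_run_filter_iff b).2 hu
  rw [Finset.mem_filter] at this
  exact this.2 u le_rfl

lemma ne_runOf (b : Fin n → Fin n) (x : Fin n) : (b x : ℕ) ≠ runOf b := by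
  intro h
  have hrn : runOf b < n := h ▸ (b x).2
  have : runOf b ∈ (Finset.range n).filter (fun i => ∀ j ≤ i, ∃ x : Fin n, (b x : ℕ) = j) := by
    rw [Finset.mem_filter]
    refine ⟨Finset.mem_range.2 hrn, fun j hj => ?_⟩
    rcases eq_or_lt_of_le hj with rfl | hj'
    · exact ⟨x, h⟩
    · exact exists_eq_of_lt_run b hj'
  have := (mem_run_filter_iff b).1 this
  omega

lemma mem_RunSet {b : Fin n → Fin n} {y : Fin n} :
    y ∈ RunSet b ↔ (b y : ℕ) < runOf b ∧ ∀ j', y < j' → b j' ≠ b y := by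
  simp [RunSet]

lemma RunSet_injOn {b : Fin n → Fin n} {y y' : Fin n}
    (hy : y ∈ RunSet b) (hy' : y' ∈ RunSet b) (h : b y = b y') : y = y' := by
  rcases lt_trichotomy y y' with hlt | he | hgt
  · exact absurd h.symm ((mem_RunSet.1 hy).2 y' hlt)
  · exact he
  · exact absurd h ((mem_RunSet.1 hy').2 y hgt)

lemma exists_mem_RunSet (b : Fin n → Fin n) {x : Fin n} (hx : (b x : ℕ) < runOf b) :
    ∃ y ∈ RunSet b, x ≤ y ∧ b y = b x := by
  classical
  set S := Finset.univ.filter (fun z => b z = b x) with hS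
  have hne : S.Nonempty := ⟨x, by simp [hS]⟩
  refine ⟨S.max' hne, ?_, ?_, ?_⟩
  · have hmem := S.max'_mem hne
    simp only [hS, Finset.mem_filter] at hmem
    rw [mem_RunSet]
    refine ⟨by rw [hmem.2]; exact hx, fun j' hj' hbj => ?_⟩
    have : j' ∈ S := by rw [hS, Finset.mem_filter]; exact ⟨Finset.mem_univ _, by rw [hbj, hmem.2]⟩
    exact absurd (S.le_max' j' this) (not_le.2 hj')
  · exact S.le_max' x (by simp [hS])
  · have hmem := S.max'_mem hne
    simp only [hS, Finset.mem_filter] at hmem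
    exact hmem.2

lemma card_RunSet (b : Fin n → Fin n) : (RunSet b).card = runOf b := by
  classical
  rw [← Finset.card_range (runOf b)]
  apply Finset.card_bij (fun y _ => (b y : ℕ))
  · intro y hy
    exact Finset.mem_range.2 (mem_RunSet.1 hy).1
  · intro y hy y' hy' h
    exact RunSet_injOn hy hy' (Fin.ext h)
  · intro u hu
    obtain ⟨x, hx⟩ := exists_eq_of_lt_run b (Finset.mem_range.1 hu)
    obtain ⟨y, hy, _, hby⟩ := exists_mem_RunSet b (x := x) (by rw [hx]; exact Finset.mem_range.1 hu)
    exact ⟨y, hy, by rw [hby, hx]⟩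


lemma filter_lt_add_filter_gt (b : Fin n → Fin n) {p : Fin n} (hp : p ∉ RunSet b) :
    ((RunSet b).filter (fun y => y < p)).card + ((RunSet b).filter (fun y => p < y)).card
      = runOf b := by
  classical
  have h1 : (RunSet b).filter (fun y => ¬ y < p) = (RunSet b).filter (fun y => p < y) := by
    apply Finset.filter_congr
    intro y hy
    simp only [not_lt, eq_iff_iff]
    constructor
    · intro h
      rcases lt_or_eq_of_le h with h' | h'
      · exact h'
      · exact absurd (h' ▸ hy) hp
    · exact le_of_lt
  rw [← h1, Finset.card_filter_add_card_filter_not, card_RunSet]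

def psiVal (b : Fin n → Fin n) (p : Fin n) : ℕ :=
  if p ∈ RunSet b then ((RunSet b).filter (fun y => y ≤ p ∧ b y ≤ b p)).card - 1
  else ((RunSet b).filter (fun y => y < p)).card
       + ((RunSet b).filter (fun y => p < y ∧ b y ≤ b p)).card
       + ((b p : ℕ) - runOf b)

lemma runOf_lt_of_not_mem (b : Fin n → Fin n) {p : Fin n} (hp : p ∉ RunSet b) :
    runOf b < n := by
  rcases lt_or_eq_of_le (runOf_le b) with h | h
  · exact h
  · exfalso
    have : (RunSet b).card = n := by rw [card_RunSet, h]
    have : RunSet b = Finset.univ := Finset.eq_univ_of_card _ (by simp [this])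
    exact hp (this ▸ Finset.mem_univ p)

lemma psiVal_aux (b : Fin n → Fin n) {p : Fin n} (hp : p ∉ RunSet b) :
    ((RunSet b).filter (fun y => y < p)).card
      + ((RunSet b).filter (fun y => p < y ∧ b y ≤ b p)).card ≤ runOf b := by
  have h2 : ((RunSet b).filter (fun y => p < y ∧ b y ≤ b p)).card
      ≤ ((RunSet b).filter (fun y => p < y)).card := by
    apply Finset.card_le_card
    intro y hy
    rw [Finset.mem_filter] at hy ⊢
    exact ⟨hy.1, hy.2.1⟩
  have := filter_lt_add_filter_gt b hp
  omega

lemma psiVal_lt (b : Fin n → Fin n) (p : Fin n) : psiVal b p < n := by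
  classical
  unfold psiVal
  split_ifs with hp
  · have h1 : 1 ≤ ((RunSet b).filter (fun y => y ≤ p ∧ b y ≤ b p)).card := by
      refine Finset.card_pos.2 ⟨p, ?_⟩
      rw [Finset.mem_filter]
      exact ⟨hp, le_refl p, le_refl (b p)⟩
    have h2 : ((RunSet b).filter (fun y => y ≤ p ∧ b y ≤ b p)).card ≤ runOf b := by
      rw [← card_RunSet b]
      exact Finset.card_le_card (Finset.filter_subset _ _)
    have := runOf_le b
    have := p.2
    omega
  · have := psiVal_aux b hp
    have := runOf_lt_of_not_mem b hp
    have := (b p).2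
    omega

def psi (b : Fin n → Fin n) : Fin n → Fin n := fun p => ⟨psiVal b p, psiVal_lt b p⟩

lemma psi_mem (b : Fin n → Fin n) {p : Fin n} (hp : p ∈ RunSet b) :
    (psi b p : ℕ) + 1 = ((RunSet b).filter (fun y => y ≤ p ∧ b y ≤ b p)).card := by
  have h1 : 1 ≤ ((RunSet b).filter (fun y => y ≤ p ∧ b y ≤ b p)).card := by
    refine Finset.card_pos.2 ⟨p, ?_⟩
    rw [Finset.mem_filter]
    exact ⟨hp, le_refl p, le_refl (b p)⟩
  show psiVal b p + 1 = _
  unfold psiVal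
  rw [if_pos hp]
  omega

lemma psi_not_mem (b : Fin n → Fin n) {p : Fin n} (hp : p ∉ RunSet b) :
    (psi b p : ℕ) = ((RunSet b).filter (fun y => y < p)).card
       + ((RunSet b).filter (fun y => p < y ∧ b y ≤ b p)).card
       + ((b p : ℕ) - runOf b) := by
  show psiVal b p = _
  unfold psiVal
  rw [if_neg hp]

lemma psi_not_mem_gt (b : Fin n → Fin n) {p : Fin n} (hp : p ∉ RunSet b) :
    ((RunSet b).filter (fun y => y < p)).card < (psi b p : ℕ) := by
  rw [psi_not_mem b hp]
  by_cases hb : (b p : ℕ) < runOf b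
  · obtain ⟨y, hy, hpy, hby⟩ := exists_mem_RunSet b hb
    have hne : y ≠ p := fun h => hp (h ▸ hy)
    have hlt : p < y := lt_of_le_of_ne hpy (Ne.symm hne)
    have h1 : 1 ≤ ((RunSet b).filter (fun y => p < y ∧ b y ≤ b p)).card := by
      refine Finset.card_pos.2 ⟨y, ?_⟩
      rw [Finset.mem_filter]
      exact ⟨hy, hlt, le_of_eq hby⟩
    omega
  · have := ne_runOf b p
    omega

lemma psi_char (b : Fin n → Fin n) (p : Fin n) :
    p ∈ RunSet b ↔ (psi b p : ℕ) ≤ ((RunSet b).filter (fun y => y < p)).card := by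
  constructor
  · intro hp
    have h := psi_mem b hp
    have hsub : (RunSet b).filter (fun y => y ≤ p ∧ b y ≤ b p)
        ⊆ insert p ((RunSet b).filter (fun y => y < p)) := by
      intro y hy
      rw [Finset.mem_filter] at hy
      rcases lt_or_eq_of_le hy.2.1 with h' | h'
      · exact Finset.mem_insert_of_mem (Finset.mem_filter.2 ⟨hy.1, h'⟩)
      · exact h' ▸ Finset.mem_insert_self _ _
    have := (Finset.card_le_card hsub).trans (Finset.card_insert_le _ _)
    omega
  · intro h
    by_contra hp
    exact absurd h (not_le.2 (psi_not_mem_gt b hp))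

lemma centered_psi (b : Fin n → Fin n) : Centered (psi b) (RunSet b) := by
  intro x hx
  rw [psi_mem b hx]
  apply Finset.card_le_card
  intro y hy
  rw [Finset.mem_filter] at hy ⊢
  exact ⟨hy.1, hy.2.1⟩


lemma filter_val_lt_eq (S : Finset (Fin n)) {k : ℕ} (hk : k < n) :
    S.filter (fun y : Fin n => (y : ℕ) < k) = S.filter (fun y => y < (⟨k, hk⟩ : Fin n)) := by
  apply Finset.filter_congr
  intro y _
  simp [Fin.lt_def]

lemma filter_le_val_eq (S : Finset (Fin n)) {k : ℕ} (hk : k < n) :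
    S.filter (fun y : Fin n => (y : ℕ) < k + 1) = S.filter (fun y => y ≤ (⟨k, hk⟩ : Fin n)) := by
  apply Finset.filter_congr
  intro y _
  simp only [eq_iff_iff, Fin.le_def]
  omega

lemma card_filter_lt_succ (S : Finset (Fin n)) {k : ℕ} (hk : k < n) :
    (S.filter (fun y : Fin n => (y : ℕ) < k + 1)).card
      = (S.filter (fun y : Fin n => (y : ℕ) < k)).card
        + (if (⟨k, hk⟩ : Fin n) ∈ S then 1 else 0) := by
  classical
  set p : Fin n := ⟨k, hk⟩ with hpdef
  by_cases hp : p ∈ S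
  · rw [if_pos hp]
    have : S.filter (fun y : Fin n => (y : ℕ) < k + 1) = insert p (S.filter (fun y : Fin n => (y : ℕ) < k)) := by
      ext y
      rw [Finset.mem_insert, Finset.mem_filter, Finset.mem_filter]
      constructor
      · rintro ⟨hyS, hyk⟩
        by_cases h : (y : ℕ) < k
        · exact Or.inr ⟨hyS, h⟩
        · refine Or.inl (Fin.ext ?_)
          show (y : ℕ) = k
          omega
      · rintro (rfl | ⟨hyS, hyk⟩)
        · exact ⟨hp, Nat.lt_succ_self k⟩
        · exact ⟨hyS, by omega⟩
    rw [this, Finset.card_insert_of_notMem]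
    rw [Finset.mem_filter]
    rintro ⟨-, h⟩
    exact absurd h (by simp [hpdef])
  · rw [if_neg hp]
    congr 1
    apply Finset.filter_congr
    intro y hy
    constructor
    · intro h
      rcases Nat.lt_succ_iff_lt_or_eq.1 h with h' | h'
      · exact h'
      · exact absurd ((Fin.ext h' : y = p) ▸ hy) hp
    · omega

lemma filter_val_lt_n (S : Finset (Fin n)) :
    S.filter (fun y : Fin n => (y : ℕ) < n) = S := by
  apply Finset.filter_true_of_mem
  intro y _
  exact y.2

lemma card_le_of_centered (b : Fin n → Fin n) (X : Finset (Fin n))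
    (hX : Centered (psi b) X) : X.card ≤ runOf b := by
  classical
  have H : ∀ k, k ≤ n → (X.filter (fun y : Fin n => (y : ℕ) < k)).card
      ≤ ((RunSet b).filter (fun y : Fin n => (y : ℕ) < k)).card := by
    intro k
    induction k with
    | zero => intro _; simp
    | succ k ih =>
      intro hk1
      have hk : k < n := hk1
      have IH := ih (le_of_lt hk)
      set p : Fin n := ⟨k, hk⟩ with hpdef
      rw [card_filter_lt_succ X hk, card_filter_lt_succ (RunSet b) hk]
      by_cases hpX : p ∈ X
      · have hcent := hX p hpX
        have hXeq : (X.filter (fun y => y ≤ p)).card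
            = (X.filter (fun y : Fin n => (y : ℕ) < k)).card + 1 := by
          rw [← filter_le_val_eq X hk, card_filter_lt_succ X hk, if_pos hpX]
        rw [hXeq] at hcent
        by_cases hpR : p ∈ RunSet b
        · rw [if_pos hpX, if_pos hpR]; omega
        · exfalso
          have hgt := psi_not_mem_gt b hpR
          rw [← filter_val_lt_eq (RunSet b) hk] at hgt
          omega
      · rw [if_neg hpX]
        split_ifs <;> omega
  have := H n le_rfl
  rw [filter_val_lt_n X, filter_val_lt_n (RunSet b), card_RunSet] at this
  exact this

lemma zOf_psi (b : Fin n → Fin n) : zOf (psi b) = runOf b := by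
  have hmem : runOf b ∈ {k : ℕ | ∃ X : Finset (Fin n), Centered (psi b) X ∧ X.card = k} :=
    ⟨RunSet b, centered_psi b, card_RunSet b⟩
  have hub : ∀ k ∈ {k : ℕ | ∃ X : Finset (Fin n), Centered (psi b) X ∧ X.card = k},
      k ≤ runOf b := by
    rintro k ⟨X, hX, rfl⟩
    exact card_le_of_centered b X hX
  exact le_antisymm (csSup_le ⟨runOf b, hmem⟩ hub) (le_csSup ⟨runOf b, hub⟩ hmem)

lemma greedy_unique (a : Fin n → Fin n) (S S' : Finset (Fin n))
    (hS : ∀ p : Fin n, p ∈ S ↔ (a p : ℕ) ≤ (S.filter (fun y => y < p)).card)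
    (hS' : ∀ p : Fin n, p ∈ S' ↔ (a p : ℕ) ≤ (S'.filter (fun y => y < p)).card) :
    S = S' := by
  classical
  have H : ∀ k, k ≤ n → S.filter (fun y : Fin n => (y : ℕ) < k) = S'.filter (fun y : Fin n => (y : ℕ) < k) := by
    intro k
    induction k with
    | zero => intro _; simp
    | succ k ih =>
      intro hk1
      have hk : k < n := hk1
      have IH := ih (le_of_lt hk)
      set p : Fin n := ⟨k, hk⟩ with hpdef
      have hmem : p ∈ S ↔ p ∈ S' := by
        rw [hS p, hS' p, ← filter_val_lt_eq S hk, ← filter_val_lt_eq S' hk, IH]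
      ext y
      rw [Finset.mem_filter, Finset.mem_filter]
      constructor
      · rintro ⟨hyS, hyk⟩
        by_cases h : (y : ℕ) < k
        · have : y ∈ S'.filter (fun y : Fin n => (y : ℕ) < k) := by
            rw [← IH, Finset.mem_filter]; exact ⟨hyS, h⟩
          rw [Finset.mem_filter] at this
          exact ⟨this.1, by omega⟩
        · have hy : y = p := Fin.ext (show (y:ℕ) = k by omega)
          subst hy
          exact ⟨hmem.1 hyS, by omega⟩
      · rintro ⟨hyS, hyk⟩
        by_cases h : (y : ℕ) < k
        · have : y ∈ S.filter (fun y : Fin n => (y : ℕ) < k) := by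
            rw [IH, Finset.mem_filter]; exact ⟨hyS, h⟩
          rw [Finset.mem_filter] at this
          exact ⟨this.1, by omega⟩
        · have hy : y = p := Fin.ext (show (y:ℕ) = k by omega)
          subst hy
          exact ⟨hmem.2 hyS, by omega⟩
  have := H n le_rfl
  rwa [filter_val_lt_n, filter_val_lt_n] at this


lemma filter_le_count (b : Fin n → Fin n) {v : ℕ} (hv : v < runOf b) :
    ((RunSet b).filter (fun y => (b y : ℕ) ≤ v)).card = v + 1 := by
  classical
  rw [← Finset.card_range (v + 1)]
  apply Finset.card_bij (fun y _ => (b y : ℕ))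
  · intro y hy
    rw [Finset.mem_filter] at hy
    exact Finset.mem_range.2 (by omega)
  · intro y hy y' hy' h
    rw [Finset.mem_filter] at hy hy'
    exact RunSet_injOn hy.1 hy'.1 (Fin.ext h)
  · intro u hu
    rw [Finset.mem_range] at hu
    obtain ⟨x, hx⟩ := exists_eq_of_lt_run b (show u < runOf b by omega)
    obtain ⟨y, hy, _, hby⟩ := exists_mem_RunSet b (x := x) (by omega)
    refine ⟨y, Finset.mem_filter.2 ⟨hy, ?_⟩, by rw [hby, hx]⟩
    rw [hby, hx]; omega

lemma count_b_ge (b : Fin n → Fin n) {v : ℕ} (hv : v < runOf b) :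
    v + 1 ≤ (Finset.univ.filter (fun p => (b p : ℕ) ≤ v)).card := by
  rw [← filter_le_count b hv]
  apply Finset.card_le_card
  intro y hy
  rw [Finset.mem_filter] at hy
  exact Finset.mem_filter.2 ⟨Finset.mem_univ _, hy.2⟩

lemma rank_strict_mono {b : Fin n → Fin n} {p q : Fin n}
    (hp : p ∈ RunSet b) (hq : q ∈ RunSet b) (hpq : p < q) :
    ((RunSet b).filter (fun y => y ≤ p)).card < ((RunSet b).filter (fun y => y ≤ q)).card := by
  apply Finset.card_lt_card
  constructor
  · intro y hy
    rw [Finset.mem_filter] at hy ⊢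
    exact ⟨hy.1, le_trans hy.2 (le_of_lt hpq)⟩
  · intro hsub
    have : q ∈ (RunSet b).filter (fun y => y ≤ p) :=
      hsub (Finset.mem_filter.2 ⟨hq, le_refl q⟩)
    rw [Finset.mem_filter] at this
    exact absurd this.2 (not_le.2 hpq)

lemma count_a_ge (b : Fin n → Fin n) {v : ℕ} (hv : v < runOf b) :
    v + 1 ≤ (Finset.univ.filter (fun p => (psi b p : ℕ) ≤ v)).card := by
  classical
  set T := (RunSet b).filter (fun p => ¬ (psi b p : ℕ) ≤ v) with hT
  have hTcard : T.card ≤ runOf b - (v + 1) := by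
    have h1 : T.card ≤ (Finset.Icc (v + 2) (runOf b)).card := by
      apply Finset.card_le_card_of_injOn (fun p => ((RunSet b).filter (fun y => y ≤ p)).card)
      · intro p hp
        rw [hT, Finset.mem_coe, Finset.mem_filter] at hp
        have hc := centered_psi b p hp.1
        have hle : ((RunSet b).filter (fun y => y ≤ p)).card ≤ runOf b := by
          rw [← card_RunSet b]
          exact Finset.card_le_card (Finset.filter_subset _ _)
        simp only [Finset.mem_coe, Finset.mem_Icc]
        constructor
        · have := hp.2
          omega
        · exact hle
      · intro p hp q hq h
        simp only [hT, Finset.mem_coe, Finset.mem_filter] at hp hq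
        by_contra hne
        rcases lt_or_gt_of_ne hne with h' | h'
        · exact absurd h (ne_of_lt (rank_strict_mono hp.1 hq.1 h'))
        · exact absurd h.symm (ne_of_lt (rank_strict_mono hq.1 hp.1 h'))
    rw [Nat.card_Icc] at h1
    omega
  have hsplit : ((RunSet b).filter (fun p => (psi b p : ℕ) ≤ v)).card + T.card
      = runOf b := by
    rw [hT, Finset.card_filter_add_card_filter_not, card_RunSet]
  have h2 : ((RunSet b).filter (fun p => (psi b p : ℕ) ≤ v)).card
      ≤ (Finset.univ.filter (fun p => (psi b p : ℕ) ≤ v)).card := by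
    apply Finset.card_le_card
    intro y hy
    rw [Finset.mem_filter] at hy
    exact Finset.mem_filter.2 ⟨Finset.mem_univ _, hy.2⟩
  omega

lemma count_eq (b : Fin n → Fin n) {v : ℕ} (hv : runOf b ≤ v) :
    (Finset.univ.filter (fun p => (psi b p : ℕ) ≤ v))
      = (Finset.univ.filter (fun p => (b p : ℕ) ≤ v)) := by
  classical
  ext p
  simp only [Finset.mem_filter, Finset.mem_univ, true_and]
  by_cases hp : p ∈ RunSet b
  · have h1 := psi_mem b hp
    have h2 : ((RunSet b).filter (fun y => y ≤ p ∧ b y ≤ b p)).card ≤ runOf b := by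
      rw [← card_RunSet b]
      exact Finset.card_le_card (Finset.filter_subset _ _)
    have h3 := (mem_RunSet.1 hp).1
    constructor <;> intro _ <;> omega
  · have h1 := psi_not_mem b hp
    by_cases hb : (b p : ℕ) < runOf b
    · have h2 := psiVal_aux b hp
      constructor <;> intro _ <;> omega
    · have hgt : runOf b < (b p : ℕ) := lt_of_le_of_ne (not_lt.1 hb) (Ne.symm (ne_runOf b p))
      have hfe : (RunSet b).filter (fun y => p < y ∧ b y ≤ b p)
          = (RunSet b).filter (fun y => p < y) := by
        apply Finset.filter_congr
        intro y hy
        have := (mem_RunSet.1 hy).1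
        constructor
        · exact fun h => h.1
        · intro h
          refine ⟨h, ?_⟩
          rw [Fin.le_def]
          omega
      rw [hfe] at h1
      have h3 := filter_lt_add_filter_gt b hp
      constructor <;> intro _ <;> omega

lemma pf_iff (b : Fin n → Fin n) : IsParkingFunction (psi b) ↔ IsParkingFunction b := by
  classical
  have hconv : ∀ (w : Fin n → Fin n) (i : Fin n),
      Finset.univ.filter (fun j => w j ≤ i) = Finset.univ.filter (fun j => (w j : ℕ) ≤ (i : ℕ)) := by
    intro w i
    apply Finset.filter_congr
    intro j _
    exact Fin.le_def
  constructor
  · intro h i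
    rw [hconv]
    by_cases hi : (i : ℕ) < runOf b
    · exact count_b_ge b hi
    · rw [← count_eq b (not_lt.1 hi)]
      have := h i
      rwa [hconv] at this
  · intro h i
    rw [hconv]
    by_cases hi : (i : ℕ) < runOf b
    · exact count_a_ge b hi
    · rw [count_eq b (not_lt.1 hi)]
      have := h i
      rwa [hconv] at this


lemma rank_inj_aux {V : Finset ℕ} {s t : ℕ} (hs : s ∈ V) (ht : t ∈ V)
    (h : (V.filter (fun u => u ≤ s)).card = (V.filter (fun u => u ≤ t)).card) : s = t := by
  classical
  have key : ∀ s t : ℕ, s ∈ V → t ∈ V → s < t →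
      (V.filter (fun u => u ≤ s)).card < (V.filter (fun u => u ≤ t)).card := by
    intro s t hs ht hst
    apply Finset.card_lt_card
    constructor
    · intro u hu
      rw [Finset.mem_filter] at hu ⊢
      exact ⟨hu.1, by omega⟩
    · intro hsub
      have := hsub (Finset.mem_filter.2 ⟨ht, le_refl t⟩)
      rw [Finset.mem_filter] at this
      omega
  rcases lt_trichotomy s t with h' | h' | h'
  · exact absurd h (ne_of_lt (key s t hs ht h'))
  · exact h'
  · exact absurd h.symm (ne_of_lt (key t s ht hs h'))

/-- The value set available at position `p` : values `< runOf b` not used by `RunSet`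
positions after `p`. -/
def Vof (b : Fin n → Fin n) (p : Fin n) : Finset ℕ :=
  (Finset.range (runOf b)) \ (((RunSet b).filter (fun y => p < y)).image (fun y => (b y : ℕ)))

lemma bp_mem_Vof (b : Fin n → Fin n) {p : Fin n} (hp : p ∈ RunSet b) :
    (b p : ℕ) ∈ Vof b p := by
  classical
  rw [Vof, Finset.mem_sdiff]
  refine ⟨Finset.mem_range.2 (mem_RunSet.1 hp).1, ?_⟩
  intro hmem
  obtain ⟨y, hy, hby⟩ := Finset.mem_image.1 hmem
  rw [Finset.mem_filter] at hy
  have : y = p := RunSet_injOn hy.1 hp (Fin.ext hby)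
  exact absurd (this ▸ hy.2) (lt_irrefl p)

lemma rank_formula (b : Fin n → Fin n) {p : Fin n} (hp : p ∈ RunSet b) :
    ((RunSet b).filter (fun y => y ≤ p ∧ b y ≤ b p)).card
      = ((Vof b p).filter (fun u => u ≤ (b p : ℕ))).card := by
  classical
  apply Finset.card_bij (fun y _ => (b y : ℕ))
  · intro y hy
    rw [Finset.mem_filter] at hy
    obtain ⟨hyR, hyp, hyb⟩ := hy
    rw [Finset.mem_filter, Vof, Finset.mem_sdiff]
    refine ⟨⟨Finset.mem_range.2 (mem_RunSet.1 hyR).1, ?_⟩, Fin.le_def.1 hyb⟩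
    intro hmem
    obtain ⟨y', hy', hby'⟩ := Finset.mem_image.1 hmem
    rw [Finset.mem_filter] at hy'
    have : y' = y := RunSet_injOn hy'.1 hyR (Fin.ext hby')
    subst this
    exact absurd (lt_of_le_of_lt hyp hy'.2) (lt_irrefl y')
  · intro y hy y' hy' h
    rw [Finset.mem_filter] at hy hy'
    exact RunSet_injOn hy.1 hy'.1 (Fin.ext h)
  · intro u hu
    rw [Finset.mem_filter, Vof, Finset.mem_sdiff] at hu
    obtain ⟨⟨hur, hunim⟩, hub⟩ := hu
    obtain ⟨x, hx⟩ := exists_eq_of_lt_run b (Finset.mem_range.1 hur)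
    obtain ⟨y, hy, _, hby⟩ := exists_mem_RunSet b (x := x) (by rw [hx]; exact Finset.mem_range.1 hur)
    have hbyu : (b y : ℕ) = u := by rw [hby, hx]
    have hyp : y ≤ p := by
      by_contra hyp
      exact hunim (Finset.mem_image.2 ⟨y, Finset.mem_filter.2 ⟨hy, not_le.1 hyp⟩, hbyu⟩)
    exact ⟨y, Finset.mem_filter.2 ⟨hy, hyp, Fin.le_def.2 (by omega)⟩, hbyu⟩

/-- Strict monotonicity of the decoding function at a non-RunSet position. -/
lemma m_strict (b : Fin n → Fin n) {p : Fin n} (hp : p ∉ RunSet b) {β₁ β₂ : ℕ}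
    (h12 : β₁ < β₂) (hβ₂ : β₂ ≠ runOf b)
    (hocc : β₂ < runOf b → ∃ y ∈ RunSet b, p < y ∧ (b y : ℕ) = β₂) :
    ((RunSet b).filter (fun y => p < y ∧ (b y : ℕ) ≤ β₁)).card + (β₁ - runOf b)
      < ((RunSet b).filter (fun y => p < y ∧ (b y : ℕ) ≤ β₂)).card + (β₂ - runOf b) := by
  classical
  have hsub : (RunSet b).filter (fun y => p < y ∧ (b y : ℕ) ≤ β₁)
      ⊆ (RunSet b).filter (fun y => p < y ∧ (b y : ℕ) ≤ β₂) := by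
    intro y hy
    rw [Finset.mem_filter] at hy ⊢
    exact ⟨hy.1, hy.2.1, by omega⟩
  have hcard := Finset.card_le_card hsub
  by_cases h2 : β₂ < runOf b
  · obtain ⟨y, hy, hpy, hby⟩ := hocc h2
    have hstrict : (RunSet b).filter (fun y => p < y ∧ (b y : ℕ) ≤ β₁)
        ⊂ (RunSet b).filter (fun y => p < y ∧ (b y : ℕ) ≤ β₂) := by
      refine ⟨hsub, fun hsub' => ?_⟩
      have := hsub' (Finset.mem_filter.2 ⟨hy, hpy, by omega⟩)
      rw [Finset.mem_filter] at this
      omega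
    have := Finset.card_lt_card hstrict
    omega
  · have hr2 : runOf b < β₂ := by omega
    omega

lemma psi_injective : Function.Injective (psi : (Fin n → Fin n) → (Fin n → Fin n)) := by
  intro b b' hab
  have hr : runOf b = runOf b' := by rw [← zOf_psi b, ← zOf_psi b', hab]
  have hR : RunSet b = RunSet b' := by
    apply greedy_unique (psi b)
    · exact psi_char b
    · intro p
      rw [hab]
      exact psi_char b' p
  -- Step 3: agreement on RunSet
  have hbR : ∀ p ∈ RunSet b, b p = b' p := by
    by_contra hcon
    push_neg at hcon
    obtain ⟨p₀, hp₀, hne₀⟩ := hcon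
    set D := (RunSet b).filter (fun p => b p ≠ b' p) with hD
    have hDne : D.Nonempty := ⟨p₀, Finset.mem_filter.2 ⟨hp₀, hne₀⟩⟩
    set p := D.max' hDne with hpdef
    have hpD : p ∈ D := D.max'_mem hDne
    have hpR : p ∈ RunSet b := (Finset.mem_filter.1 hpD).1
    have hpne : b p ≠ b' p := (Finset.mem_filter.1 hpD).2
    have hgt : ∀ y ∈ RunSet b, p < y → b y = b' y := by
      intro y hy hpy
      by_contra hne
      have : y ∈ D := Finset.mem_filter.2 ⟨hy, hne⟩
      exact absurd (D.le_max' y this) (not_le.2 hpy)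
    have hpR' : p ∈ RunSet b' := hR ▸ hpR
    -- the two value sets coincide
    have hV : Vof b p = Vof b' p := by
      rw [Vof, Vof, hr, ← hR]
      congr 1
      apply Finset.image_congr
      intro y hy
      rw [Finset.mem_coe, Finset.mem_filter] at hy
      show ((b y : ℕ) : ℕ) = (b' y : ℕ)
      rw [hgt y hy.1 hy.2]
    have hA : (psi b p : ℕ) + 1 = ((Vof b p).filter (fun u => u ≤ (b p : ℕ))).card := by
      rw [psi_mem b hpR, rank_formula b hpR]
    have hB : (psi b' p : ℕ) + 1 = ((Vof b p).filter (fun u => u ≤ (b' p : ℕ))).card := by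
      rw [psi_mem b' hpR', rank_formula b' hpR', hV]
    have hpsi : (psi b p : ℕ) = (psi b' p : ℕ) := by rw [hab]
    have h1 : ((Vof b p).filter (fun u => u ≤ (b p : ℕ))).card
        = ((Vof b p).filter (fun u => u ≤ (b' p : ℕ))).card := by omega
    have h2 : (b p : ℕ) = (b' p : ℕ) := by
      apply rank_inj_aux (V := Vof b p) (bp_mem_Vof b hpR) _ h1
      rw [hV]
      exact bp_mem_Vof b' (hR ▸ hpR)
    exact hpne (Fin.ext h2)
  -- Step 4: agreement off RunSet
  funext p
  by_cases hp : p ∈ RunSet b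
  · exact hbR p hp
  · have hp' : p ∉ RunSet b' := hR ▸ hp
    have e1 := psi_not_mem b hp
    have e2 := psi_not_mem b' hp'
    rw [← hR, ← hr] at e2
    -- rewrite e2's middle filter in terms of b
    have hfe : (RunSet b).filter (fun y => p < y ∧ b' y ≤ b' p)
        = (RunSet b).filter (fun y => p < y ∧ (b y : ℕ) ≤ (b' p : ℕ)) := by
      apply Finset.filter_congr
      intro y hy
      constructor
      · rintro ⟨h1, h2⟩
        exact ⟨h1, by rw [hbR y hy]; exact Fin.le_def.1 h2⟩
      · rintro ⟨h1, h2⟩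
        refine ⟨h1, Fin.le_def.2 ?_⟩
        rw [← hbR y hy]
        exact h2
    have hfe1 : (RunSet b).filter (fun y => p < y ∧ b y ≤ b p)
        = (RunSet b).filter (fun y => p < y ∧ (b y : ℕ) ≤ (b p : ℕ)) := by
      apply Finset.filter_congr
      intro y _
      exact and_congr_right (fun _ => Fin.le_def)
    rw [hfe] at e2
    rw [hfe1] at e1
    have heq : ((RunSet b).filter (fun y => p < y ∧ (b y : ℕ) ≤ (b p : ℕ))).card
          + ((b p : ℕ) - runOf b)
        = ((RunSet b).filter (fun y => p < y ∧ (b y : ℕ) ≤ (b' p : ℕ))).card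
          + ((b' p : ℕ) - runOf b) := by
      have := hab ▸ e1
      omega
    have hocc : ∀ (c : Fin n → Fin n), RunSet c = RunSet b → runOf c = runOf b →
        (∀ y ∈ RunSet b, c y = b y ∨ True) → True := fun _ _ _ _ => trivial
    -- occurrence facts
    have hoccb : (b p : ℕ) < runOf b → ∃ y ∈ RunSet b, p < y ∧ (b y : ℕ) = (b p : ℕ) := by
      intro h
      obtain ⟨y, hy, hpy, hby⟩ := exists_mem_RunSet b h
      have hne : y ≠ p := fun hh => hp (hh ▸ hy)
      exact ⟨y, hy, lt_of_le_of_ne hpy (Ne.symm hne), by rw [hby]⟩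
    have hoccb' : (b' p : ℕ) < runOf b → ∃ y ∈ RunSet b, p < y ∧ (b y : ℕ) = (b' p : ℕ) := by
      intro h
      obtain ⟨y, hy, hpy, hby⟩ := exists_mem_RunSet b' (x := p) (by rw [← hr]; exact h)
      rw [← hR] at hy
      have hne : y ≠ p := fun hh => hp (hh ▸ hy)
      refine ⟨y, hy, lt_of_le_of_ne hpy (Ne.symm hne), ?_⟩
      rw [hbR y hy, hby]
    rcases lt_trichotomy ((b p : ℕ)) ((b' p : ℕ)) with h' | h' | h'
    · exfalso
      have hne2 : (b' p : ℕ) ≠ runOf b := by have := ne_runOf b' p; omega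
      have := m_strict b hp h' hne2 hoccb'
      omega
    · exact Fin.ext h'
    · exfalso
      have := m_strict b hp h' (ne_runOf b p) hoccb
      omega


end CRB

theorem exists_center_run_bijection (n : ℕ) (hn : 1 ≤ n) :
    ∃ Φ : (Fin n → Fin n) ≃ (Fin n → Fin n),
      (∀ a : Fin n → Fin n,
        Centered a (RunSet (Φ a)) ∧
        (∀ X : Finset (Fin n), Centered a X → X.card ≤ (RunSet (Φ a)).card) ∧
        runOf (Φ a) = zOf a) ∧
      (∀ a : Fin n → Fin n, IsParkingFunction (Φ a) ↔ IsParkingFunction a) := by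
  classical
  have hbij : Function.Bijective (CRB.psi : (Fin n → Fin n) → (Fin n → Fin n)) :=
    Finite.injective_iff_bijective.mp CRB.psi_injective
  refine ⟨(Equiv.ofBijective _ hbij).symm, ?_, ?_⟩
  · intro a
    set b := (Equiv.ofBijective _ hbij).symm a with hbdef
    have ha : CRB.psi b = a := (Equiv.ofBijective _ hbij).apply_symm_apply a
    refine ⟨?_, ?_, ?_⟩
    · rw [← ha]
      exact CRB.centered_psi b
    · intro X hX
      rw [CRB.card_RunSet]
      exact CRB.card_le_of_centered b X (by rw [ha]; exact hX)
    · rw [← ha]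
      exact (CRB.zOf_psi b).symm
  · intro a
    set b := (Equiv.ofBijective _ hbij).symm a with hbdef
    have ha : CRB.psi b = a := (Equiv.ofBijective _ hbij).apply_symm_apply a
    rw [← ha]
    exact (CRB.pf_iff b).symm


end
end

section
/- Let k ≥ 2, let ℓ_1,…,ℓ_k be positive integers, and let i be an index with 1 ≤ i < k and ℓ_{i+1} > 1. Then N(ℓ_1,…,ℓ_{i−1}, ℓ_i + 1, ℓ_{i+1} − 1, ℓ_{i+2},…,ℓ_k) = N(ℓ_1,…,ℓ_k) + N(ℓ_1,…,ℓ_{i−1}) · N(ℓ_{i+1} − 1, ℓ_{i+2},…,ℓ_k). -/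
open Finset

noncomputable section
open scoped Classical

lemma take_sum_le_abs : ∀ (L : List ℤ) (k : ℕ),
    (L.take k).sum ≤ (L.map (fun t => |t|)).sum := by
  intro L
  induction L with
  | nil => intro k; simp
  | cons a L ih =>
    intro k
    cases k with
    | zero =>
      simp only [List.take_zero, List.sum_nil, List.map_cons, List.sum_cons]
      have : (0:ℤ) ≤ (L.map (fun t => |t|)).sum :=
        List.sum_nonneg (by simp only [List.mem_map]; rintro x ⟨y, _, rfl⟩; exact abs_nonneg y)
      have := abs_nonneg a
      linarith
    | succ k =>
      simp only [List.take_succ_cons, List.sum_cons, List.map_cons]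
      have := ih k
      have := le_abs_self a
      linarith

lemma nbr_finite (L : List ℤ) : Finite {x : Fin (L.length + 1) → ℤ //
    x 0 = 0 ∧ ∀ i : Fin L.length,
      x i.castSucc < x i.succ ∧ x i.succ ≤ (L.take ((i : ℕ) + 1)).sum} := by
  set M := (L.map (fun t => |t|)).sum with hM
  have hM0 : (0:ℤ) ≤ M := List.sum_nonneg (by
    simp only [List.mem_map]; rintro x ⟨y, _, rfl⟩; exact abs_nonneg y)
  have key : ∀ x : {x : Fin (L.length + 1) → ℤ //
      x 0 = 0 ∧ ∀ i : Fin L.length,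
        x i.castSucc < x i.succ ∧ x i.succ ≤ (L.take ((i : ℕ) + 1)).sum},
      ∀ i : Fin (L.length + 1), x.1 i ∈ Set.Icc (0:ℤ) M := by
    rintro ⟨x, hx0, hx⟩ i
    -- prove 0 ≤ x ⟨k⟩ and x ⟨k⟩ ≤ M by induction on k
    have main : ∀ k : ℕ, ∀ h : k < L.length + 1, 0 ≤ x ⟨k, h⟩ ∧ x ⟨k, h⟩ ≤ M := by
      intro k
      induction k with
      | zero => intro h; simp only [Fin.mk_zero, hx0]; exact ⟨le_refl _, hM0⟩
      | succ k ih =>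
        intro h
        have hk : k < L.length := by omega
        have hc := hx ⟨k, hk⟩
        have e1 : (⟨k, hk⟩ : Fin L.length).castSucc = ⟨k, by omega⟩ := rfl
        have e2 : (⟨k, hk⟩ : Fin L.length).succ = ⟨k + 1, h⟩ := rfl
        rw [e1, e2] at hc
        refine ⟨?_, ?_⟩
        · have := (ih (by omega)).1
          linarith [hc.1]
        · exact le_trans hc.2 (take_sum_le_abs L (k + 1))
    simpa using main i.1 i.2
  haveI : Finite (Set.Icc (0:ℤ) M) := Set.Finite.to_subtype (Set.finite_Icc 0 M)
  apply Finite.of_injective (fun x => (fun i => (⟨x.1 i, key x i⟩ : Set.Icc (0:ℤ) M)))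
  intro x y hxy
  apply Subtype.ext
  funext i
  exact congrArg Subtype.val (congrFun hxy i)

lemma Nbr_nil : Nbr [] = 1 := by
  unfold Nbr
  have : Unique {x : Fin (([] : List ℤ).length + 1) → ℤ // x 0 = 0 ∧ ∀ i : Fin ([] : List ℤ).length,
      x i.castSucc < x i.succ ∧ x i.succ ≤ (([] : List ℤ).take ((i : ℕ) + 1)).sum} := by
    refine ⟨⟨⟨fun _ => 0, rfl, fun i => i.elim0⟩⟩, ?_⟩
    rintro ⟨x, hx0, _⟩
    apply Subtype.ext
    funext i
    have : i = 0 := Fin.ext (by have := i.isLt; simp only [List.length_nil] at this ⊢; omega)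
    simp [this, hx0]
  haveI := this
  exact Nat.card_unique

lemma Nbr_single (c : ℤ) : Nbr [c] = c.toNat := by
  unfold Nbr
  show Nat.card {x : Fin 2 → ℤ // x 0 = 0 ∧ ∀ i : Fin 1,
      x i.castSucc < x i.succ ∧ x i.succ ≤ (([c] : List ℤ).take ((i : ℕ) + 1)).sum} = c.toNat
  have e : {x : Fin 2 → ℤ // x 0 = 0 ∧ ∀ i : Fin 1,
      x i.castSucc < x i.succ ∧ x i.succ ≤ (([c] : List ℤ).take ((i : ℕ) + 1)).sum} ≃
      (Finset.Icc (1:ℤ) c) := by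
    refine ⟨fun x => ⟨x.1 1, ?_⟩, fun t => ⟨Fin.cons 0 (fun _ => t.1), rfl, ?_⟩, ?_, ?_⟩
    · obtain ⟨x, hx0, hx⟩ := x
      have h := hx 0
      simp only [Finset.mem_Icc]
      constructor
      · have := h.1
        rw [show (0 : Fin 1).castSucc = 0 from rfl, hx0] at this
        have h1 : (0 : Fin 1).succ = 1 := rfl
        rw [h1] at this
        omega
      · have := h.2
        simp only [List.take_succ_cons, List.take_zero, List.sum_cons, List.sum_nil,
          add_zero] at this
        rw [show (0 : Fin 1).succ = 1 from rfl] at this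
        simpa using this
    · intro i
      have hi : i = 0 := Subsingleton.elim i 0
      rw [hi]
      have h1 : (0 : Fin 1).succ = 1 := rfl
      have h0 : (0 : Fin 1).castSucc = 0 := rfl
      rw [h0, h1]
      have hm := t.2
      simp only [Finset.mem_Icc] at hm
      have v1 : (Fin.cons (0:ℤ) (fun _ => (t.1:ℤ)) : Fin 2 → ℤ) 1 = t.1 := by
        rw [show (1 : Fin 2) = Fin.succ 0 from rfl, Fin.cons_succ]
      have v0 : (Fin.cons (0:ℤ) (fun _ => (t.1:ℤ)) : Fin 2 → ℤ) 0 = 0 := Fin.cons_zero _ _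
      rw [v0, v1]
      constructor
      · omega
      · simpa using hm.2
    · rintro ⟨x, hx0, hx⟩
      apply Subtype.ext
      funext i
      match i with
      | ⟨0, h⟩ => simpa using hx0.symm
      | ⟨1, h⟩ => simp [show ((⟨1, h⟩ : Fin 2)) = Fin.succ 0 from rfl, Fin.cons_succ]
    · intro t
      apply Subtype.ext
      show (Fin.cons (0:ℤ) (fun _ => (t.1:ℤ)) : Fin 2 → ℤ) 1 = t.1
      rw [show (1 : Fin 2) = Fin.succ 0 from rfl, Fin.cons_succ]
  rw [Nat.card_congr e, Nat.card_eq_finsetCard, Int.card_Icc]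
  simp

lemma take_two_sum (c d : ℤ) (L : List ℤ) (k : ℕ) :
    ((c :: d :: L).take (k + 2)).sum = c + d + (L.take k).sum := by
  simp [List.take_succ_cons]; ring

lemma take_one_sum (e : ℤ) (M : List ℤ) (k : ℕ) :
    ((e :: M).take (k + 1)).sum = e + (M.take k).sum := by
  simp [List.take_succ_cons]

def Ok (L : List ℤ) (x : Fin (L.length + 1) → ℤ) : Prop :=
  x 0 = 0 ∧ ∀ i : Fin L.length,
    x i.castSucc < x i.succ ∧ x i.succ ≤ (L.take ((i : ℕ) + 1)).sum

lemma Nbr_eq_ok (L : List ℤ) : Nbr L = Nat.card {x // Ok L x} := rfl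

lemma fwd_ok (c d t : ℤ) (L : List ℤ) (x : Fin (L.length + 3) → ℤ)
    (h : Ok (c :: d :: L) x) (hfib : x 1 = t) :
    Ok ((d + c - t) :: L) (fun j => x j.succ - t) := by
  constructor
  · show x (Fin.succ 0) - t = 0
    rw [Fin.succ_zero_eq_one, hfib]
    ring
  · intro i
    have hh := h.2 i.succ
    have hcs : (i.succ).castSucc = (i.castSucc).succ := (Fin.succ_castSucc i).symm
    rw [hcs] at hh
    have hval : ((i.succ : Fin (L.length + 2)) : ℕ) + 1 = (i : ℕ) + 2 := by
      simp [Fin.val_succ]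
    rw [hval, take_two_sum] at hh
    refine ⟨by have := hh.1; simp only []; omega, ?_⟩
    show x i.succ.succ - t ≤ _
    rw [take_one_sum]
    have := hh.2
    omega

lemma bwd_ok (c d t : ℤ) (L : List ℤ) (ht1 : 1 ≤ t) (htc : t ≤ c)
    (y : Fin (L.length + 2) → ℤ) (h : Ok ((d + c - t) :: L) y) :
    Ok (c :: d :: L) (Fin.cons 0 (fun j => y j + t)) := by
  refine ⟨Fin.cons_zero _ _, ?_⟩
  intro i
  induction i using Fin.cases with
  | zero =>
    rw [Fin.castSucc_zero]
    simp only [Fin.cons_zero, Fin.cons_succ]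
    rw [h.1]
    constructor
    · omega
    · simp only [Fin.val_zero, zero_add, List.take_succ_cons, List.take_zero,
        List.sum_cons, List.sum_nil, add_zero]
      omega
  | succ j =>
    rw [← Fin.succ_castSucc]
    simp only [Fin.cons_succ]
    have hh := h.2 j
    rw [take_one_sum] at hh
    simp only [Fin.val_succ]
    rw [show (j : ℕ) + 1 + 1 = (j : ℕ) + 2 from rfl, take_two_sum]
    refine ⟨by have := hh.1; omega, ?_⟩
    have := hh.2
    omega

lemma bwd_fib (t : ℤ) (n : ℕ) (y : Fin (n + 2) → ℤ) (h0 : y 0 = 0) :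
    (Fin.cons (0:ℤ) (fun j : Fin (n + 2) => y j + t) : Fin (n + 3) → ℤ) 1 = t := by
  rw [← Fin.succ_zero_eq_one]
  simp only [Fin.cons_succ]
  rw [h0]
  ring

lemma fiber_card (c d t : ℤ) (L : List ℤ) (ht1 : 1 ≤ t) (htc : t ≤ c) :
    Nat.card {p : {x // Ok (c :: d :: L) x} // p.1 1 = t} = Nbr ((d + c - t) :: L) := by
  rw [Nbr_eq_ok]
  apply Nat.card_congr
  exact {
    toFun := fun p => ⟨fun j => p.1.1 j.succ - t, fwd_ok c d t L p.1.1 p.1.2 p.2⟩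
    invFun := fun y => ⟨⟨Fin.cons 0 (fun j => y.1 j + t), bwd_ok c d t L ht1 htc y.1 y.2⟩,
      bwd_fib t L.length y.1 y.2.1⟩
    left_inv := by
      intro p
      apply Subtype.ext
      apply Subtype.ext
      funext i
      induction i using Fin.cases with
      | zero =>
        show (0:ℤ) = p.1.1 0
        exact p.1.2.1.symm
      | succ j =>
        show p.1.1 j.succ - t + t = p.1.1 j.succ
        ring
    right_inv := by
      intro y
      apply Subtype.ext
      funext j
      show (Fin.cons (0:ℤ) (fun j : Fin (L.length + 2) => y.1 j + t) :
          Fin (L.length + 3) → ℤ) j.succ - t = y.1 j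
      simp only [Fin.cons_succ]
      ring }

lemma Nbr_cons_cons (c d : ℤ) (L : List ℤ) :
    Nbr (c :: d :: L) = ∑ t ∈ Finset.Icc (1:ℤ) c, Nbr ((d + c - t) :: L) := by
  classical
  rw [Nbr_eq_ok]
  haveI : Finite {x // Ok (c :: d :: L) x} := nbr_finite (c :: d :: L)
  haveI : Fintype {x // Ok (c :: d :: L) x} := Fintype.ofFinite _
  rw [Nat.card_eq_fintype_card]
  have hmem : ∀ p : {x // Ok (c :: d :: L) x}, p.1 1 ∈ Finset.Icc (1:ℤ) c := by
    intro p
    have h := p.2.2 (0 : Fin (L.length + 2))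
    rw [Fin.castSucc_zero, Fin.succ_zero_eq_one, p.2.1] at h
    simp only [Fin.val_zero, zero_add, List.take_succ_cons, List.take_zero,
      List.sum_cons, List.sum_nil, add_zero] at h
    simp only [Finset.mem_Icc]
    omega
  have hsum := Finset.card_eq_sum_card_fiberwise
    (f := fun p : {x // Ok (c :: d :: L) x} => p.1 1)
    (s := Finset.univ) (t := Finset.Icc (1:ℤ) c) (fun p _ => hmem p)
  rw [← Finset.card_univ, hsum]
  refine Finset.sum_congr rfl ?_
  intro t ht
  simp only [Finset.mem_Icc] at ht
  rw [← fiber_card c d t L ht.1 ht.2]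
  rw [Nat.card_eq_fintype_card, Fintype.card_subtype]

lemma key_rec : ∀ (n : ℕ) (P S : List ℤ) (a b : ℤ), P.length ≤ n →
    (∀ x ∈ P, 0 < x) → 0 < a →
    Nbr (P ++ (a + 1) :: (b - 1) :: S) =
      Nbr (P ++ a :: b :: S) + Nbr P * Nbr ((b - 1) :: S) := by
  intro n
  induction n with
  | zero =>
    intro P S a b hlen hP ha
    have hPn : P = [] := List.length_eq_zero_iff.mp (Nat.le_zero.mp hlen)
    subst hPn
    simp only [List.nil_append]
    rw [Nbr_cons_cons (a+1) (b-1) S, Nbr_cons_cons a b S, Nbr_nil, one_mul]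
    have hins : Finset.Icc (1:ℤ) (a+1) = insert (a+1) (Finset.Icc 1 a) := by
      ext x
      simp only [Finset.mem_Icc, Finset.mem_insert]
      omega
    have hnm : (a+1) ∉ Finset.Icc (1:ℤ) a := by
      simp only [Finset.mem_Icc]
      omega
    rw [hins, Finset.sum_insert hnm]
    have h1 : b - 1 + (a + 1) - (a + 1) = b - 1 := by ring
    rw [h1]
    have h2 : ∀ t ∈ Finset.Icc (1:ℤ) a,
        Nbr ((b - 1 + (a + 1) - t) :: S) = Nbr ((b + a - t) :: S) := by
      intro t _
      rw [show b - 1 + (a + 1) - t = b + a - t by ring]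
    rw [Finset.sum_congr rfl h2]
    omega
  | succ n ih =>
    intro P S a b hlen hP ha
    match P with
    | [] => exact ih [] S a b (by simp) hP ha
    | [c] =>
      have hc : 0 < c := hP c (by simp)
      simp only [List.cons_append, List.nil_append]
      rw [Nbr_cons_cons c (a+1) ((b-1)::S), Nbr_cons_cons c a (b :: S), Nbr_single]
      have h2 : ∀ t ∈ Finset.Icc (1:ℤ) c,
          Nbr ((a + 1 + c - t) :: (b-1) :: S) =
            Nbr ((a + c - t) :: b :: S) + Nbr ((b - 1) :: S) := by
        intro t ht
        simp only [Finset.mem_Icc] at ht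
        have := ih [] S (a + c - t) b (by simp) (by simp) (by omega)
        simp only [List.nil_append, Nbr_nil, one_mul] at this
        rw [show a + 1 + c - t = (a + c - t) + 1 by ring, this]
      rw [Finset.sum_congr rfl h2, Finset.sum_add_distrib, Finset.sum_const,
        Int.card_Icc]
      simp only [smul_eq_mul]
      congr 1
      rw [show c + 1 - 1 = c by ring]
    | c :: p :: Q =>
      have hc : 0 < c := hP c (by simp)
      have hp : 0 < p := hP p (by simp)
      simp only [List.cons_append]
      rw [Nbr_cons_cons c p (Q ++ (a+1) :: (b-1) :: S),
        Nbr_cons_cons c p (Q ++ a :: b :: S), Nbr_cons_cons c p Q]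
      have h2 : ∀ t ∈ Finset.Icc (1:ℤ) c,
          Nbr ((p + c - t) :: (Q ++ (a+1) :: (b-1) :: S)) =
            Nbr ((p + c - t) :: (Q ++ a :: b :: S)) +
              Nbr ((p + c - t) :: Q) * Nbr ((b - 1) :: S) := by
        intro t ht
        simp only [Finset.mem_Icc] at ht
        have hlen' : ((p + c - t) :: Q).length ≤ n := by
          simp only [List.length_cons] at hlen ⊢
          omega
        have hpos : ∀ x ∈ (p + c - t) :: Q, 0 < x := by
          intro x hx
          rcases List.mem_cons.mp hx with h | h
          · omega
          · exact hP x (by simp [h])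
        have := ih ((p + c - t) :: Q) S a b hlen' hpos ha
        simpa only [List.cons_append] using this
      rw [Finset.sum_congr rfl h2, Finset.sum_add_distrib, ← Finset.sum_mul]

theorem nbr_middle_recurrence (P S : List ℤ) (a b : ℤ)
    (hP : ∀ x ∈ P, 0 < x) (hS : ∀ x ∈ S, 0 < x) (ha : 0 < a) (hb : 1 < b) :
    Nbr (P ++ [a + 1, b - 1] ++ S) =
      Nbr (P ++ [a, b] ++ S) + Nbr P * Nbr ((b - 1) :: S) := by
  have h1 : P ++ [a + 1, b - 1] ++ S = P ++ (a + 1) :: (b - 1) :: S := by simp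
  have h2 : P ++ [a, b] ++ S = P ++ a :: b :: S := by simp
  rw [h1, h2]
  exact key_rec P.length P S a b le_rfl hP ha

end
end

section
/- Let k ≥ 2 and let ℓ_1,…,ℓ_k be positive integers with ℓ_1 > 1. Then N(ℓ_1 − 1, ℓ_2,…,ℓ_k) = N(ℓ_1,…,ℓ_k) − N(ℓ_1 + ℓ_2 − 1, ℓ_3,…,ℓ_k). -/
open Finset

noncomputable section
open scoped Classical

/-- The predicate defining the tuples counted by `Nbr`. -/
def NbrP (L : List ℤ) (x : Fin (L.length + 1) → ℤ) : Prop :=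
  x 0 = 0 ∧ ∀ i : Fin L.length,
    x i.castSucc < x i.succ ∧ x i.succ ≤ (L.take ((i : ℕ) + 1)).sum

lemma nbr_eq_card (L : List ℤ) :
    Nbr L = Nat.card {x : Fin (L.length + 1) → ℤ // NbrP L x} := rfl

lemma nbrP_iff (L : List ℤ) (x : Fin (L.length + 1) → ℤ) :
    NbrP L x ↔ x 0 = 0 ∧ ∀ k : ℕ, ∀ h : k < L.length,
      x ⟨k, by omega⟩ < x ⟨k + 1, by omega⟩ ∧
        x ⟨k + 1, by omega⟩ ≤ (L.take (k + 1)).sum := by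
  constructor
  · rintro ⟨h0, h⟩
    refine ⟨h0, fun k hk => ?_⟩
    simpa using h ⟨k, hk⟩
  · rintro ⟨h0, h⟩
    refine ⟨h0, ?_⟩
    rintro ⟨k, hk⟩
    simpa using h k hk

lemma nbr_finite_s13 (L : List ℤ) (hL : ∀ t ∈ L, 0 ≤ t) :
    Finite {x : Fin (L.length + 1) → ℤ // NbrP L x} := by
  have key : ∀ x : {x : Fin (L.length + 1) → ℤ // NbrP L x}, ∀ i,
      x.1 i ∈ Set.Icc (0 : ℤ) L.sum := by
    rintro ⟨x, h0, h⟩ i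
    have hnn : ∀ j, 0 ≤ x j := by
      intro j
      induction j using Fin.induction with
      | zero => exact le_of_eq h0.symm
      | succ j ih => exact (ih.trans_lt (h j).1).le
    have htake : ∀ k, (L.take k).sum ≤ L.sum := by
      intro k
      conv_rhs => rw [← List.take_append_drop k L]
      rw [List.sum_append]
      have : 0 ≤ (L.drop k).sum :=
        List.sum_nonneg fun t ht => hL t (List.mem_of_mem_drop ht)
      linarith
    refine ⟨hnn i, ?_⟩
    rcases Fin.eq_zero_or_eq_succ i with rfl | ⟨j, rfl⟩
    · show x 0 ≤ L.sum
      rw [h0]; exact List.sum_nonneg hL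
    · show x j.succ ≤ L.sum
      exact (h j).2.trans (htake _)
  haveI : Finite (Set.Icc (0 : ℤ) L.sum) := (Set.finite_Icc _ _).to_subtype
  exact Finite.of_injective
    (fun x => (fun i => ⟨x.1 i, key x i⟩ : Fin (L.length + 1) → Set.Icc (0 : ℤ) L.sum))
    (fun x y hxy => Subtype.ext (funext fun i => congrArg Subtype.val (congrFun hxy i)))

lemma fin_mk_zero {m : ℕ} (h : 0 < m + 1) : (⟨0, h⟩ : Fin (m + 1)) = 0 := by
  apply Fin.ext; simp

def mapA (S : List ℤ) (a b : ℤ) (x : Fin (((a - 1) :: b :: S).length + 1) → ℤ) :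
    Fin ((a :: b :: S).length + 1) → ℤ :=
  fun i => if (i : ℕ) = 0 then 0 else x i + 1

def invA (S : List ℤ) (a b : ℤ) (x : Fin ((a :: b :: S).length + 1) → ℤ) :
    Fin (((a - 1) :: b :: S).length + 1) → ℤ :=
  fun i => if (i : ℕ) = 0 then 0 else x i - 1

def mapB (S : List ℤ) (a b : ℤ) (y : Fin (((a + b - 1) :: S).length + 1) → ℤ) :
    Fin ((a :: b :: S).length + 1) → ℤ :=
  fun i => if (i : ℕ) = 0 then 0 else if (i : ℕ) = 1 then 1 else
    y ⟨(i : ℕ) - 1, by have := i.isLt; simp only [List.length_cons] at *; omega⟩ + 1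

def invB (S : List ℤ) (a b : ℤ) (x : Fin ((a :: b :: S).length + 1) → ℤ) :
    Fin (((a + b - 1) :: S).length + 1) → ℤ :=
  fun j => if (j : ℕ) = 0 then 0 else
    x ⟨(j : ℕ) + 1, by have := j.isLt; simp only [List.length_cons] at *; omega⟩ - 1

lemma mapA_mem (S : List ℤ) (a b : ℤ) (x : Fin (((a - 1) :: b :: S).length + 1) → ℤ)
    (hx : NbrP ((a - 1) :: b :: S) x) : NbrP (a :: b :: S) (mapA S a b x) := by
  obtain ⟨h0, h⟩ := (nbrP_iff _ _).mp hx
  rw [nbrP_iff]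
  refine ⟨by simp [mapA], fun k hk => ?_⟩
  simp only [List.length_cons] at hk
  obtain ⟨h1, h2⟩ := h k (by simp only [List.length_cons]; omega)
  simp only [mapA, List.take_succ_cons, List.sum_cons, List.take_zero,
    List.sum_nil, add_zero] at h2 ⊢
  rcases Nat.eq_zero_or_pos k with rfl | hk0
  · have hx0 : x ⟨0, by simp only [List.length_cons]; omega⟩ = 0 := by
      rw [show (⟨0, by simp only [List.length_cons]; omega⟩ :
        Fin (((a - 1) :: b :: S).length + 1)) = 0 from by apply Fin.ext; simp]
      exact h0
    rw [hx0] at h1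
    split_ifs <;> first
      | (exact False.elim ‹False›)
      | (exfalso; omega)
      | (constructor <;> first | linarith | (exact False.elim ‹False›))
  · split_ifs <;> first
      | (exact False.elim ‹False›)
      | (exfalso; omega)
      | (constructor <;> first | linarith | (exact False.elim ‹False›))

lemma mapA_ne (S : List ℤ) (a b : ℤ) (x : Fin (((a - 1) :: b :: S).length + 1) → ℤ)
    (hx : NbrP ((a - 1) :: b :: S) x) : ¬ mapA S a b x 1 = 1 := by
  obtain ⟨h0, h⟩ := (nbrP_iff _ _).mp hx
  obtain ⟨h1, h2⟩ := h 0 (by simp only [List.length_cons]; omega)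
  have hx0 : x ⟨0, by simp only [List.length_cons]; omega⟩ = 0 := by
    rw [show (⟨0, by simp only [List.length_cons]; omega⟩ :
      Fin (((a - 1) :: b :: S).length + 1)) = 0 from by apply Fin.ext; simp]
    exact h0
  rw [hx0] at h1
  have hcv : (⟨0 + 1, by simp only [List.length_cons]; omega⟩ :
      Fin (((a - 1) :: b :: S).length + 1)) = 1 := by apply Fin.ext; simp
  rw [hcv] at h1
  simp only [mapA]
  rw [if_neg (show ((1 : Fin (((a - 1) :: b :: S).length + 1)) : ℕ) ≠ 0 by simp)]
  intro hcon
  linarith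

lemma invA_mem (S : List ℤ) (a b : ℤ) (x : Fin ((a :: b :: S).length + 1) → ℤ)
    (hx : NbrP (a :: b :: S) x) (hx1 : ¬ x 1 = 1) :
    NbrP ((a - 1) :: b :: S) (invA S a b x) := by
  obtain ⟨h0, h⟩ := (nbrP_iff _ _).mp hx
  rw [nbrP_iff]
  refine ⟨by simp [invA], fun k hk => ?_⟩
  simp only [List.length_cons] at hk
  obtain ⟨h1, h2⟩ := h k (by simp only [List.length_cons]; omega)
  simp only [invA, List.take_succ_cons, List.sum_cons, List.take_zero,
    List.sum_nil, add_zero] at h2 ⊢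
  rcases Nat.eq_zero_or_pos k with rfl | hk0
  · have hx0 : x ⟨0, by simp only [List.length_cons]; omega⟩ = 0 := by
      rw [show (⟨0, by simp only [List.length_cons]; omega⟩ :
        Fin ((a :: b :: S).length + 1)) = 0 from by apply Fin.ext; simp]
      exact h0
    rw [hx0] at h1
    have hone : x ⟨0 + 1, by simp only [List.length_cons]; omega⟩ ≠ 1 := by
      intro hcon
      apply hx1
      rw [show (1 : Fin ((a :: b :: S).length + 1)) =
        ⟨0 + 1, by simp only [List.length_cons]; omega⟩ from by apply Fin.ext; simp]
      exact hcon
    have h1' := Int.add_one_le_iff.mpr h1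
    have h1x : (1 : ℤ) < x ⟨0 + 1, by simp only [List.length_cons]; omega⟩ :=
      lt_of_le_of_ne (by linarith) (Ne.symm hone)
    have h1y := Int.add_one_le_iff.mpr h1x
    split_ifs <;> first
      | (exact False.elim ‹False›)
      | (exfalso; omega)
      | (constructor <;> first | linarith | (exact False.elim ‹False›))
  · split_ifs <;> first
      | (exact False.elim ‹False›)
      | (exfalso; omega)
      | (constructor <;> first | linarith | (exact False.elim ‹False›))

lemma invA_mapA (S : List ℤ) (a b : ℤ) (x : Fin (((a - 1) :: b :: S).length + 1) → ℤ)
    (hx : NbrP ((a - 1) :: b :: S) x) : invA S a b (mapA S a b x) = x := by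
  funext i
  simp only [invA, mapA]
  by_cases hi : (i : ℕ) = 0
  · rw [if_pos hi]
    have hi0 : i = 0 := by apply Fin.ext; simp [hi]
    rw [hi0]
    exact hx.1.symm
  · rw [if_neg hi, if_neg hi]
    ring

lemma mapA_invA (S : List ℤ) (a b : ℤ) (x : Fin ((a :: b :: S).length + 1) → ℤ)
    (hx : NbrP (a :: b :: S) x) : mapA S a b (invA S a b x) = x := by
  funext i
  simp only [invA, mapA]
  by_cases hi : (i : ℕ) = 0
  · rw [if_pos hi]
    have hi0 : i = 0 := by apply Fin.ext; simp [hi]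
    rw [hi0]
    exact hx.1.symm
  · rw [if_neg hi, if_neg hi]
    ring

lemma mapB_mem (S : List ℤ) (a b : ℤ) (ha : 1 < a)
    (y : Fin (((a + b - 1) :: S).length + 1) → ℤ)
    (hy : NbrP ((a + b - 1) :: S) y) : NbrP (a :: b :: S) (mapB S a b y) := by
  obtain ⟨h0, h⟩ := (nbrP_iff _ _).mp hy
  rw [nbrP_iff]
  refine ⟨by simp [mapB], fun k hk => ?_⟩
  simp only [List.length_cons] at hk
  rcases k with _ | _ | k
  · -- k = 0
    simp only [mapB, List.take_succ_cons, List.sum_cons, List.take_zero,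
      List.sum_nil, add_zero]
    split_ifs <;> first
      | (exact False.elim ‹False›)
      | (exfalso; omega)
      | (constructor <;> first | linarith | (exact False.elim ‹False›))
  · -- k = 1
    obtain ⟨h1, h2⟩ := h 0 (by simp only [List.length_cons]; omega)
    have hy0 : y ⟨0, by simp only [List.length_cons]; omega⟩ = 0 := by
      rw [show (⟨0, by simp only [List.length_cons]; omega⟩ :
        Fin (((a + b - 1) :: S).length + 1)) = 0 from by apply Fin.ext; simp]
      exact h0
    rw [hy0] at h1
    simp only [mapB, List.take_succ_cons, List.sum_cons, List.take_zero,
      List.sum_nil, add_zero, Nat.add_sub_cancel] at h2 ⊢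
    split_ifs <;> first
      | (exact False.elim ‹False›)
      | (exfalso; omega)
      | (constructor <;> first | linarith | (exact False.elim ‹False›))
  · -- k = m + 2
    obtain ⟨h1, h2⟩ := h (k + 1) (by simp only [List.length_cons]; omega)
    simp only [mapB, List.take_succ_cons, List.sum_cons, List.take_zero,
      List.sum_nil, add_zero, Nat.add_sub_cancel] at h2 ⊢
    split_ifs <;> first
      | (exact False.elim ‹False›)
      | (exfalso; omega)
      | (constructor <;> first | linarith | (exact False.elim ‹False›))

lemma mapB_one (S : List ℤ) (a b : ℤ) (y : Fin (((a + b - 1) :: S).length + 1) → ℤ) :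
    mapB S a b y 1 = 1 := by
  simp [mapB, Fin.val_one]

lemma invB_mem (S : List ℤ) (a b : ℤ) (x : Fin ((a :: b :: S).length + 1) → ℤ)
    (hx : NbrP (a :: b :: S) x) (hx1 : x 1 = 1) :
    NbrP ((a + b - 1) :: S) (invB S a b x) := by
  obtain ⟨h0, h⟩ := (nbrP_iff _ _).mp hx
  rw [nbrP_iff]
  refine ⟨by simp [invB], fun k hk => ?_⟩
  simp only [List.length_cons] at hk
  obtain ⟨h1, h2⟩ := h (k + 1) (by simp only [List.length_cons]; omega)
  simp only [invB, List.take_succ_cons, List.sum_cons, List.take_zero,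
    List.sum_nil, add_zero] at h2 ⊢
  rcases Nat.eq_zero_or_pos k with rfl | hk0
  · have hone : x ⟨0 + 1, by simp only [List.length_cons]; omega⟩ = 1 := by
      rw [show (⟨0 + 1, by simp only [List.length_cons]; omega⟩ :
        Fin ((a :: b :: S).length + 1)) = 1 from by apply Fin.ext; simp]
      exact hx1
    rw [hone] at h1
    split_ifs <;> first
      | (exact False.elim ‹False›)
      | (exfalso; omega)
      | (constructor <;> first | linarith | (exact False.elim ‹False›))
  · split_ifs <;> first
      | (exact False.elim ‹False›)
      | (exfalso; omega)
      | (constructor <;> first | linarith | (exact False.elim ‹False›))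

lemma invB_mapB (S : List ℤ) (a b : ℤ) (y : Fin (((a + b - 1) :: S).length + 1) → ℤ)
    (hy : NbrP ((a + b - 1) :: S) y) : invB S a b (mapB S a b y) = y := by
  funext j
  simp only [invB, mapB]
  by_cases hj : (j : ℕ) = 0
  · rw [if_pos hj]
    have hj0 : j = 0 := by apply Fin.ext; simp [hj]
    rw [hj0]
    exact hy.1.symm
  · rw [if_neg hj, if_neg (by omega : ¬ ((j : ℕ) + 1 = 0)),
      if_neg (by omega : ¬ ((j : ℕ) + 1 = 1))]
    simp only [Nat.add_sub_cancel, Fin.eta]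
    ring

lemma mapB_invB (S : List ℤ) (a b : ℤ) (x : Fin ((a :: b :: S).length + 1) → ℤ)
    (hx : NbrP (a :: b :: S) x) (hx1 : x 1 = 1) : mapB S a b (invB S a b x) = x := by
  funext i
  simp only [invB, mapB]
  by_cases hi : (i : ℕ) = 0
  · rw [if_pos hi]
    have hi0 : i = 0 := by apply Fin.ext; simp [hi]
    rw [hi0]
    exact hx.1.symm
  · rw [if_neg hi]
    by_cases hi1 : (i : ℕ) = 1
    · rw [if_pos hi1]
      have hi1x : i = 1 := by apply Fin.ext; simp [hi1, Fin.val_one]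
      rw [hi1x]
      exact hx1.symm
    · rw [if_neg hi1, if_neg (by omega : ¬ ((i : ℕ) - 1 = 0))]
      simp only [Nat.sub_add_cancel (show 1 ≤ (i : ℕ) by omega), Fin.eta]
      ring

lemma nbr_split (S : List ℤ) (a b : ℤ)
    (hS : ∀ x ∈ S, 0 < x) (ha : 1 < a) (hb : 0 < b) :
    Nbr (a :: b :: S) = Nbr ((a - 1) :: b :: S) + Nbr ((a + b - 1) :: S) := by
  classical
  haveI F2 : Finite {x : Fin ((a :: b :: S).length + 1) → ℤ // NbrP (a :: b :: S) x} := by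
    apply nbr_finite_s13
    intro t ht
    rcases List.mem_cons.mp ht with rfl | ht
    · linarith
    rcases List.mem_cons.mp ht with rfl | ht
    · linarith
    · exact (hS t ht).le
  have eA : {x : Fin (((a - 1) :: b :: S).length + 1) → ℤ // NbrP ((a - 1) :: b :: S) x} ≃
      {x : {x : Fin ((a :: b :: S).length + 1) → ℤ // NbrP (a :: b :: S) x} // ¬ x.1 1 = 1} :=
    { toFun := fun x => ⟨⟨mapA S a b x.1, mapA_mem S a b x.1 x.2⟩, mapA_ne S a b x.1 x.2⟩
      invFun := fun x => ⟨invA S a b x.1.1, invA_mem S a b x.1.1 x.1.2 x.2⟩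
      left_inv := fun x => Subtype.ext (invA_mapA S a b x.1 x.2)
      right_inv := fun x => Subtype.ext (Subtype.ext (mapA_invA S a b x.1.1 x.1.2)) }
  have eB : {x : Fin (((a + b - 1) :: S).length + 1) → ℤ // NbrP ((a + b - 1) :: S) x} ≃
      {x : {x : Fin ((a :: b :: S).length + 1) → ℤ // NbrP (a :: b :: S) x} // x.1 1 = 1} :=
    { toFun := fun y => ⟨⟨mapB S a b y.1, mapB_mem S a b ha y.1 y.2⟩, mapB_one S a b y.1⟩
      invFun := fun x => ⟨invB S a b x.1.1, invB_mem S a b x.1.1 x.1.2 x.2⟩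
      left_inv := fun y => Subtype.ext (invB_mapB S a b y.1 y.2)
      right_inv := fun x => Subtype.ext (Subtype.ext (mapB_invB S a b x.1.1 x.1.2 x.2)) }
  rw [nbr_eq_card, nbr_eq_card, nbr_eq_card, Nat.card_congr eA, Nat.card_congr eB]
  have hsum := Nat.card_congr (Equiv.sumCompl
    (fun x : {x : Fin ((a :: b :: S).length + 1) → ℤ // NbrP (a :: b :: S) x} => x.1 1 = 1))
  rw [Nat.card_sum] at hsum
  omega

theorem nbr_first_recurrence (S : List ℤ) (a b : ℤ)
    (hS : ∀ x ∈ S, 0 < x) (ha : 1 < a) (hb : 0 < b) :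
    (Nbr ((a - 1) :: b :: S) : ℤ) =
      (Nbr (a :: b :: S) : ℤ) - (Nbr ((a + b - 1) :: S) : ℤ) := by
  have h := nbr_split S a b hS ha hb
  rw [h]
  push_cast
  ring

end
end

section
/- Let n ≥ 1 and let 𝔄 = (A_1,…,A_k) be an ordered partition of {1,…,n} into k nonempty blocks. The number of parking functions of length n that are of type 𝔄 equals binom(n, k−1). -/
open Finset

noncomputable section
open scoped Classical

namespace PFAux

variable {n k : ℕ}

def Cf (d ℓ : Fin k → ℕ) (m : ℕ) : ℕ := ∑ j ∈ univ.filter (fun j => d j < m), ℓ j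

lemma Cf_split (d ℓ : Fin k → ℕ) {a b : ℕ} (hab : a ≤ b) :
    Cf d ℓ b = Cf d ℓ a + ∑ j ∈ univ.filter (fun j => a ≤ d j ∧ d j < b), ℓ j := by
  unfold Cf
  have h1 : (univ.filter (fun j => d j < b))
      = (univ.filter (fun j => d j < a)) ∪ (univ.filter (fun j => a ≤ d j ∧ d j < b)) := by
    ext j; simp only [mem_filter, mem_union, mem_univ, true_and]; omega
  rw [h1, Finset.sum_union]
  rw [Finset.disjoint_left]
  intro j hj hj'
  simp only [mem_filter, mem_univ, true_and] at hj hj'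
  omega

lemma Cf_tail (d ℓ : Fin k → ℕ) (hsum : ∑ j, ℓ j = n) {a : ℕ} :
    Cf d ℓ a + ∑ j ∈ univ.filter (fun j => a ≤ d j), ℓ j = n := by
  unfold Cf
  rw [← hsum, ← Finset.sum_filter_add_sum_filter_not univ (fun j => d j < a) ℓ]
  congr 1
  apply Finset.sum_congr _ (fun _ _ => rfl)
  ext j; simp only [mem_filter, mem_univ, true_and]; omega

lemma mod_if {c x : ℕ} (hx : x ≤ n) (hc : c ≤ n) :
    (x + c) % (n+1) = if x + c ≤ n then x + c else x + c - (n+1) := by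
  split
  · exact Nat.mod_eq_of_lt (by omega)
  · rw [Nat.mod_eq_sub_mod (by omega), Nat.mod_eq_of_lt (by omega)]

lemma S_id_le (d ℓ : Fin k → ℕ) (hdn : ∀ j, d j ≤ n) (hsum : ∑ j, ℓ j = n)
    {c i : ℕ} (hc : c ≤ n) (hci : c ≤ i) (hi : i < n) :
    (∑ j ∈ univ.filter (fun j => (d j + c) % (n+1) ≤ i), ℓ j) + Cf d ℓ (n+1-c)
      = Cf d ℓ (i+1-c) + n := by
  have hsplit : univ.filter (fun j => (d j + c) % (n+1) ≤ i)
      = univ.filter (fun j => d j < i+1-c) ∪ univ.filter (fun j => n+1-c ≤ d j) := by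
    ext j
    have hj := hdn j
    have hm := mod_if (n := n) (c := c) (x := d j) hj hc
    simp only [mem_filter, mem_union, mem_univ, true_and]
    rw [hm]; split <;> omega
  rw [hsplit, Finset.sum_union]
  · have h2 := Cf_tail d ℓ hsum (a := n+1-c)
    have h3 : (∑ j ∈ univ.filter (fun j => d j < i+1-c), ℓ j) = Cf d ℓ (i+1-c) := rfl
    omega
  · rw [Finset.disjoint_left]
    intro j hj hj'
    simp only [mem_filter, mem_univ, true_and] at hj hj'
    omega

lemma S_id_gt (d ℓ : Fin k → ℕ) (hdn : ∀ j, d j ≤ n)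
    {c i : ℕ} (hc : c ≤ n) (hci : i < c) (hi : i < n) :
    (∑ j ∈ univ.filter (fun j => (d j + c) % (n+1) ≤ i), ℓ j) + Cf d ℓ (n+1-c)
      = Cf d ℓ (n+2+i-c) := by
  have hsplit : univ.filter (fun j => (d j + c) % (n+1) ≤ i)
      = univ.filter (fun j => n+1-c ≤ d j ∧ d j < n+2+i-c) := by
    ext j
    have hj := hdn j
    have hm := mod_if (n := n) (c := c) (x := d j) hj hc
    simp only [mem_filter, mem_univ, true_and]
    rw [hm]; split <;> omega
  rw [hsplit]
  have := Cf_split d ℓ (a := n+1-c) (b := n+2+i-c) (by omega)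
  omega

def Dz (d ℓ : Fin k → ℕ) (m : ℕ) : ℤ := (Cf d ℓ m : ℤ) - m

def Good (d ℓ : Fin k → ℕ) (c : ℕ) : Prop :=
  ∀ i : ℕ, i < n → i + 1 ≤ ∑ j ∈ univ.filter (fun j => (d j + c) % (n+1) ≤ i), ℓ j

def FA (d ℓ : Fin k → ℕ) (r : ℕ) : Prop :=
  (∀ u, 1 ≤ u → u < r → Dz d ℓ r < Dz d ℓ u) ∧
  (∀ u, r < u → u ≤ n+1 → Dz d ℓ r ≤ Dz d ℓ u)

lemma good_iff (d ℓ : Fin k → ℕ) (hdn : ∀ j, d j ≤ n) (hsum : ∑ j, ℓ j = n)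
    {c : ℕ} (hc : c ≤ n) :
    Good (n := n) d ℓ c ↔ FA (n := n) d ℓ (n+1-c) := by
  constructor
  · intro hG
    constructor
    · intro u h1 h2
      have hi : u + c - 1 < n := by omega
      have hci : c ≤ u + c - 1 := by omega
      have hid := S_id_le d ℓ hdn hsum hc hci hi
      have hu : u + c - 1 + 1 - c = u := by omega
      rw [hu] at hid
      have hGi := hG (u + c - 1) hi
      unfold Dz; omega
    · intro u h1 h2
      have hc1 : 1 ≤ c := by omega
      have hi : u + c - n - 2 < n := by omega
      have hci : u + c - n - 2 < c := by omega
      have hid := S_id_gt d ℓ hdn hc hci hi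
      have hu : n + 2 + (u + c - n - 2) - c = u := by omega
      rw [hu] at hid
      have hGi := hG (u + c - n - 2) hi
      unfold Dz; omega
  · intro ⟨hA, hB⟩ i hi
    by_cases hci : c ≤ i
    · have hid := S_id_le d ℓ hdn hsum hc hci hi
      have h := hA (i+1-c) (by omega) (by omega)
      unfold Dz at h; omega
    · have hid := S_id_gt d ℓ hdn hc (by omega) hi
      have h := hB (n+2+i-c) (by omega) (by omega)
      unfold Dz at h; omega

lemma FA_exists_unique (d ℓ : Fin k → ℕ) :
    ∃! r : ℕ, 1 ≤ r ∧ r ≤ n+1 ∧ FA (n := n) d ℓ r := by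
  classical
  have hne : ∃ m : ℕ, m ∈ Finset.Icc 1 (n+1) ∧ ∀ u ∈ Finset.Icc 1 (n+1), Dz d ℓ m ≤ Dz d ℓ u := by
    obtain ⟨m, hm, hmin⟩ := Finset.exists_min_image (Finset.Icc 1 (n+1)) (Dz d ℓ)
      ⟨1, by simp [Nat.le_add_left]⟩
    exact ⟨m, hm, hmin⟩
  have hspec := Nat.find_spec hne
  have hrT : 1 ≤ Nat.find hne ∧ Nat.find hne ≤ n + 1 := Finset.mem_Icc.mp hspec.1
  have hrmin : ∀ u ∈ Finset.Icc 1 (n+1), Dz d ℓ (Nat.find hne) ≤ Dz d ℓ u := hspec.2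
  have hfirst : ∀ u, 1 ≤ u → u < Nat.find hne → Dz d ℓ (Nat.find hne) < Dz d ℓ u := by
    intro u h1 h2
    have hnot := Nat.find_min hne h2
    push_neg at hnot
    obtain ⟨u', hu', hlt⟩ := hnot (Finset.mem_Icc.mpr (by omega))
    have := hrmin u' hu'
    omega
  refine ⟨Nat.find hne, ⟨hrT.1, hrT.2, hfirst, fun u h1 h2 =>
    hrmin u (Finset.mem_Icc.mpr (by omega))⟩, ?_⟩
  intro r' ⟨h1, h2, hA, hB⟩
  rcases lt_trichotomy r' (Nat.find hne) with h | h | h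
  · have ha := hrmin r' (Finset.mem_Icc.mpr (by omega))
    have hb := hB (Nat.find hne) h hrT.2
    have hc := hfirst r' h1 h
    omega
  · exact h
  · have ha := hA (Nat.find hne) hrT.1 h
    have hb := hrmin r' (Finset.mem_Icc.mpr (by omega))
    omega

lemma cycle_lemma (d ℓ : Fin k → ℕ) (hdn : ∀ j, d j ≤ n) (hsum : ∑ j, ℓ j = n) :
    ∃! c : ℕ, c ≤ n ∧ Good (n := n) d ℓ c := by
  obtain ⟨r, ⟨hr1, hr2, hFA⟩, hU⟩ := FA_exists_unique (n := n) d ℓ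
  refine ⟨n+1-r, ⟨by omega, ?_⟩, ?_⟩
  · rw [good_iff d ℓ hdn hsum (by omega)]
    have : n+1-(n+1-r) = r := by omega
    rw [this]; exact hFA
  · intro c' ⟨hc', hG'⟩
    have := hU (n+1-c') ⟨by omega, by omega, (good_iff d ℓ hdn hsum hc').1 hG'⟩
    omega

lemma good_lt (d ℓ : Fin k → ℕ) (hℓ : ∀ j, 1 ≤ ℓ j) (hsum : ∑ j, ℓ j = n)
    (hn : 1 ≤ n) {c : ℕ} (hG : Good (n := n) d ℓ c) :
    ∀ j, (d j + c) % (n+1) < n := by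
  intro j0
  by_contra hj0
  have hG' := hG (n-1) (by omega)
  have hlt : ∑ j ∈ univ.filter (fun j => (d j + c) % (n+1) ≤ n-1), ℓ j < ∑ j, ℓ j := by
    apply Finset.sum_lt_sum_of_subset (Finset.filter_subset _ _) (Finset.mem_univ j0)
    · simp only [mem_filter, mem_univ, true_and]; omega
    · exact hℓ j0
    · intro j _ _; exact Nat.zero_le _
  omega

lemma pred_lt {n : ℕ} (hn : 1 ≤ n) {y : ℕ} (h : y ≤ n) : y - 1 < n := by omega

lemma fin_pos_of_ne {k : ℕ} [NeZero k] {j : Fin k} (h : j ≠ 0) : (0 : Fin k) < j := by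
  rcases k with _ | m
  · exact absurd rfl (NeZero.ne 0)
  · exact Fin.pos_of_ne_zero h

lemma mod2 {x m : ℕ} (h : x < 2 * m) : x % m = if x < m then x else x - m := by
  split
  · exact Nat.mod_eq_of_lt ‹_›
  · rw [Nat.mod_eq_sub_mod (by omega)]; exact Nat.mod_eq_of_lt (by omega)

lemma sm_diff [NeZero k] (g : Fin k → Fin n) (s : Fin k)
    (hs : StrictMono fun m => g (m + s)) :
    StrictMono fun j : Fin k => ((g j : ℕ) + (n+1) - (g 0 : ℕ)) % (n+1) := by
  have hk : 0 < k := Nat.pos_of_ne_zero (NeZero.ne k)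
  set v : Fin k → Fin n := fun m => g (m + s) with hv
  have hsv : StrictMono v := hs
  set m0 : Fin k := 0 - s with hm0
  have hg0 : g 0 = v m0 := by simp only [hv, hm0, sub_add_cancel]
  have hgm : ∀ j : Fin k, g j = v (m0 + j) := by
    intro j
    have : m0 + j + s = j := by rw [hm0, zero_sub]; exact neg_add_cancel_comm s j
    simp only [hv, this]
  have hadd : ∀ j : Fin k, ((m0 + j : Fin k) : ℕ)
      = if (m0:ℕ) + (j:ℕ) < k then (m0:ℕ) + (j:ℕ) else (m0:ℕ) + (j:ℕ) - k := by
    intro j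
    rw [Fin.val_add, mod2 (by omega)]
  have hval : ∀ j : Fin k,
      ((g j : ℕ) + (n+1) - (g 0 : ℕ)) % (n+1)
        = if (m0:ℕ) + (j:ℕ) < k then (v (m0 + j) : ℕ) - (v m0 : ℕ)
          else (v (m0 + j) : ℕ) + (n+1) - (v m0 : ℕ) := by
    intro j
    rw [hgm j, hg0]
    have hlt1 : (v (m0+j) : ℕ) < n := (v (m0+j)).isLt
    have hlt0 : (v m0 : ℕ) < n := (v m0).isLt
    split
    · rename_i hcase
      have hle : (v m0 : ℕ) ≤ (v (m0+j) : ℕ) := by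
        have : m0 ≤ m0 + j := by
          rw [Fin.le_def, hadd j, if_pos hcase]; omega
        exact hsv.monotone this
      have h1 : (v (m0+j) : ℕ) + (n+1) - (v m0 : ℕ) = (n+1) + ((v (m0+j):ℕ) - (v m0:ℕ)) := by
        omega
      rw [h1, Nat.add_mod_left, Nat.mod_eq_of_lt (by omega)]
    · rename_i hcase
      have hlt : (v (m0+j) : ℕ) < (v m0 : ℕ) := by
        have : m0 + j < m0 := by
          rw [Fin.lt_def, hadd j, if_neg hcase]
          have := j.isLt; have := m0.isLt
          omega
        exact hsv this
      exact Nat.mod_eq_of_lt (by omega)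
  intro j j' hjj'
  rw [Fin.lt_def] at hjj'
  simp only [hval j, hval j']
  have hlt1 : (v (m0+j) : ℕ) < n := (v (m0+j)).isLt
  have hlt1' : (v (m0+j') : ℕ) < n := (v (m0+j')).isLt
  have hlt0 : (v m0 : ℕ) < n := (v m0).isLt
  have hjk := j.isLt
  have hjk' := j'.isLt
  split
  · rename_i h1
    have hle : (v m0 : ℕ) ≤ (v (m0+j) : ℕ) := by
      have : m0 ≤ m0 + j := by rw [Fin.le_def, hadd j, if_pos h1]; omega
      exact hsv.monotone this
    split
    · rename_i h2
      have : m0 + j < m0 + j' := by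
        rw [Fin.lt_def, hadd j, hadd j', if_pos h1, if_pos h2]; omega
      have := hsv this
      rw [Fin.lt_def] at this
      omega
    · rename_i h2
      omega
  · rename_i h1
    split
    · rename_i h2; omega
    · rename_i h2
      have : m0 + j < m0 + j' := by
        rw [Fin.lt_def, hadd j, hadd j', if_neg h1, if_neg h2]; omega
      have := hsv this
      rw [Fin.lt_def] at this
      have hltm : (v (m0+j) : ℕ) < (v m0 : ℕ) := by
        have : m0 + j < m0 := by
          rw [Fin.lt_def, hadd j, if_neg h1]; omega
        exact hsv this
      omega

lemma cycMono_of_shift [NeZero k] (d : Fin k → ℕ) (hmono : StrictMono d) (hd0 : d 0 = 0)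
    (hdn : ∀ j, d j ≤ n) {c : ℕ} (hc : c ≤ n) (g : Fin k → Fin n)
    (hg : ∀ j, (g j : ℕ) = (d j + c) % (n+1)) :
    ∃ s : Fin k, StrictMono fun m => g (m + s) := by
  classical
  have hk : 0 < k := Nat.pos_of_ne_zero (NeZero.ne k)
  by_cases hex : ∃ m : ℕ, ∃ h : m < k, n+1 ≤ d ⟨m, h⟩ + c
  · obtain ⟨htk, htw⟩ := Nat.find_spec hex
    have ht1 : 1 ≤ Nat.find hex := by
      rcases Nat.eq_zero_or_pos (Nat.find hex) with h | h
      · exfalso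
        have h0 : (⟨Nat.find hex, htk⟩ : Fin k) = 0 := by
          apply Fin.ext; simp [h]
        rw [h0, hd0] at htw; omega
      · exact h
    have hiff : ∀ j : Fin k, n+1 ≤ d j + c ↔ Nat.find hex ≤ (j : ℕ) := by
      intro j
      constructor
      · intro h
        exact Nat.find_le ⟨j.isLt, by rw [Fin.eta]; exact h⟩
      · intro h
        have : d ⟨Nat.find hex, htk⟩ ≤ d j := hmono.monotone (by rw [Fin.le_def]; exact h)
        omega
    refine ⟨⟨Nat.find hex, htk⟩, ?_⟩
    have hadd : ∀ m : Fin k, ((m + (⟨Nat.find hex, htk⟩ : Fin k) : Fin k) : ℕ)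
        = if (m:ℕ) < k - Nat.find hex then (m:ℕ) + Nat.find hex
          else (m:ℕ) + Nat.find hex - k := by
      intro m
      rw [Fin.val_add]
      have hmk := m.isLt
      rw [mod2 (x := (m:ℕ) + (⟨Nat.find hex, htk⟩ : Fin k)) (m := k) (by simp; omega)]
      simp only [Fin.val_mk]
      split <;> split <;> omega
    intro m m' hmm'
    rw [Fin.lt_def] at hmm'
    rw [Fin.lt_def]
    simp only [hg]
    have hA := hadd m
    have hA' := hadd m'
    have hd1 := hdn (m + ⟨Nat.find hex, htk⟩)
    have hd1' := hdn (m' + ⟨Nat.find hex, htk⟩)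
    have hmk := m.isLt
    have hmk' := m'.isLt
    by_cases hw : (m:ℕ) < k - Nat.find hex
    · have hAm : ((m + (⟨Nat.find hex, htk⟩ : Fin k) : Fin k) : ℕ) = (m:ℕ) + Nat.find hex := by
        rw [hA, if_pos hw]
      by_cases hw' : (m':ℕ) < k - Nat.find hex
      · have hAm' : ((m' + (⟨Nat.find hex, htk⟩ : Fin k) : Fin k) : ℕ) = (m':ℕ) + Nat.find hex := by
          rw [hA', if_pos hw']
        have hlt : d (m + ⟨Nat.find hex, htk⟩) < d (m' + ⟨Nat.find hex, htk⟩) := by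
          apply hmono; rw [Fin.lt_def, hAm, hAm']; omega
        have hw1 : n+1 ≤ d (m + ⟨Nat.find hex, htk⟩) + c :=
          (hiff _).2 (by rw [hAm]; omega)
        have hw1' : n+1 ≤ d (m' + ⟨Nat.find hex, htk⟩) + c :=
          (hiff _).2 (by rw [hAm']; omega)
        rw [mod2 (by omega), mod2 (by omega)]
        split <;> split <;> omega
      · have hAm' : ((m' + (⟨Nat.find hex, htk⟩ : Fin k) : Fin k) : ℕ)
            = (m':ℕ) + Nat.find hex - k := by
          rw [hA', if_neg hw']
        have hw1 : n+1 ≤ d (m + ⟨Nat.find hex, htk⟩) + c :=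
          (hiff _).2 (by rw [hAm]; omega)
        have hw1' : ¬ (n+1 ≤ d (m' + ⟨Nat.find hex, htk⟩) + c) := by
          rw [hiff, hAm']; omega
        rw [mod2 (by omega), mod2 (by omega)]
        split <;> split <;> omega
    · by_cases hw' : (m':ℕ) < k - Nat.find hex
      · omega
      · have hAm : ((m + (⟨Nat.find hex, htk⟩ : Fin k) : Fin k) : ℕ)
            = (m:ℕ) + Nat.find hex - k := by
          rw [hA, if_neg hw]
        have hAm' : ((m' + (⟨Nat.find hex, htk⟩ : Fin k) : Fin k) : ℕ)
            = (m':ℕ) + Nat.find hex - k := by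
          rw [hA', if_neg hw']
        have hlt : d (m + ⟨Nat.find hex, htk⟩) < d (m' + ⟨Nat.find hex, htk⟩) := by
          apply hmono; rw [Fin.lt_def, hAm, hAm']; omega
        have hw1 : ¬ (n+1 ≤ d (m + ⟨Nat.find hex, htk⟩) + c) := by
          rw [hiff, hAm]; omega
        have hw1' : ¬ (n+1 ≤ d (m' + ⟨Nat.find hex, htk⟩) + c) := by
          rw [hiff, hAm']; omega
        rw [mod2 (by omega), mod2 (by omega)]
        split <;> split <;> omega
  · push_neg at hex
    refine ⟨0, ?_⟩
    intro m m' hmm'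
    have h1 := hex (m : ℕ) m.isLt
    have h2 := hex (m' : ℕ) m'.isLt
    simp only [Fin.eta] at h1 h2
    have h3 := hmono hmm'
    rw [Fin.lt_def]
    simp only [add_zero, hg]
    rw [Nat.mod_eq_of_lt (by omega), Nat.mod_eq_of_lt (by omega)]
    omega

lemma diff_recover [NeZero k] (g : Fin k → Fin n) (j : Fin k) :
    ((((g j : ℕ) + (n+1) - (g 0 : ℕ)) % (n+1)) + (g 0 : ℕ)) % (n+1) = (g j : ℕ) := by
  have h0 : (g 0 : ℕ) < n := (g 0).isLt
  have hj : (g j : ℕ) < n := (g j).isLt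
  rw [Nat.mod_add_mod]
  have h1 : (g j : ℕ) + (n+1) - (g 0 : ℕ) + (g 0:ℕ) = (g j : ℕ) + (n+1) := by omega
  rw [h1, Nat.add_mod_right, Nat.mod_eq_of_lt (by omega)]

lemma shift_diff {x c : ℕ} (hx : x ≤ n) (hc : c ≤ n) :
    (((x + c) % (n+1)) + (n+1) - c) % (n+1) = x := by
  have h1 : (x + c) % (n+1) < n+1 := Nat.mod_lt _ (by omega)
  have h2 : ((x + c) % (n+1)) + (n+1) - c ≡ x [MOD n+1] := by
    apply Nat.ModEq.add_right_cancel' c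
    have key : ((x + c) % (n+1)) + (n+1) - c + c = (x + c) % (n+1) + (n+1) := by omega
    rw [key]
    calc (x + c) % (n+1) + (n+1) ≡ (x + c) + (n+1) [MOD n+1] :=
          Nat.ModEq.add_right (n+1) (Nat.mod_modEq (x+c) (n+1))
      _ ≡ x + c [MOD n+1] := Nat.add_mod_right (x+c) (n+1)
  have := h2
  unfold Nat.ModEq at this
  rw [this, Nat.mod_eq_of_lt (by omega)]

end PFAux

theorem pf_type_count (n k : ℕ) (hn : 1 ≤ n) (A : Fin k → Finset (Fin n))
    (hne : ∀ j, (A j).Nonempty) (hcov : ∀ x : Fin n, ∃! j, x ∈ A j) :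
    Nat.card {a : Fin n → Fin n // IsParkingFunction a ∧ IsOfType a A} =
      n.choose (k - 1) := by
  classical
  have hk0 : 0 < k := ((hcov ⟨0, by omega⟩).exists).choose.pos
  haveI : NeZero k := ⟨by omega⟩
  have hexcov : ∀ x : Fin n, ∃ j, x ∈ A j := fun x => (hcov x).exists
  obtain ⟨idx, hmem⟩ : ∃ idx : Fin n → Fin k, ∀ x, x ∈ A (idx x) :=
    ⟨fun x => (hexcov x).choose, fun x => (hexcov x).choose_spec⟩
  have huniq : ∀ x j, x ∈ A j → idx x = j := fun x j h => (hcov x).unique (hmem x) h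
  obtain ⟨pick, hpickmem⟩ : ∃ pick : Fin k → Fin n, ∀ j, pick j ∈ A j :=
    ⟨fun j => (hne j).choose, fun j => (hne j).choose_spec⟩
  have hidxpick : ∀ j, idx (pick j) = j := fun j => huniq _ _ (hpickmem j)
  have hℓ1 : ∀ j, 1 ≤ (A j).card := fun j => Finset.card_pos.mpr (hne j)
  have hsum : ∑ j, (A j).card = n := by
    have h1 : (univ : Finset (Fin n)).card
        = ∑ j, ((univ.filter (fun x => idx x = j)).card) :=
      Finset.card_eq_sum_card_fiberwise (fun x _ => mem_univ _)
    have h2 : ∀ j, univ.filter (fun x => idx x = j) = A j := by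
      intro j; ext x; simp only [mem_filter, mem_univ, true_and]
      exact ⟨fun h => h ▸ hmem x, fun h => huniq x j h⟩
    simp only [h2] at h1
    simpa using h1.symm
  -- counting lemma
  have hcount : ∀ (g : Fin k → Fin n) (b : Fin n → Fin n), (∀ x, b x = g (idx x)) →
      ∀ i : ℕ,
      (univ.filter (fun x => (b x : ℕ) ≤ i)).card
        = ∑ j ∈ univ.filter (fun j => (g j : ℕ) ≤ i), (A j).card := by
    intro g b hb i
    rw [Finset.card_eq_sum_card_fiberwise (f := idx) (t := univ) (fun x _ => mem_univ _),
      Finset.sum_filter]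
    apply Finset.sum_congr rfl
    intro j _
    by_cases h : (g j : ℕ) ≤ i
    · rw [if_pos h]
      congr 1
      ext x
      simp only [mem_filter, mem_univ, true_and]
      constructor
      · rintro ⟨-, h2⟩; exact h2 ▸ hmem x
      · intro hx
        have h3 := huniq x j hx
        refine ⟨?_, h3⟩
        rw [hb x, h3]; exact h
    · rw [if_neg h]
      convert Finset.card_empty
      ext x
      simp only [mem_filter, mem_univ, true_and, Finset.notMem_empty, iff_false, not_and]
      intro h1 h2
      rw [hb x, h2] at h1; exact h h1
  -- decomposition of IsOfType
  have hBA : ∀ (s : Fin k) (m : Fin k),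
      (⟨((m:ℕ) + (s:ℕ)) % k, Nat.mod_lt _ m.pos⟩ : Fin k) = m + s := by
    intro s m; apply Fin.ext; rw [Fin.val_add]
  have hdecomp : ∀ a : Fin n → Fin n, IsOfType a A →
      ∃ (s : Fin k) (v : Fin k → Fin n), StrictMono v ∧ ∀ x, a x = v (idx x - s) := by
    rintro a ⟨s', hs', hBne, hBcov, hBfib, hBmono⟩
    set sf : Fin k := ⟨s', hs'⟩ with hsfdef
    have hmemB : ∀ m : Fin k,
        (hne (m + sf)).choose ∈ A ⟨((m:ℕ) + s') % k, Nat.mod_lt _ m.pos⟩ := by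
      intro m
      have : (⟨((m:ℕ) + s') % k, Nat.mod_lt _ m.pos⟩ : Fin k) = m + sf := hBA sf m
      rw [this]
      exact (hne (m + sf)).choose_spec
    refine ⟨sf, fun m => a ((hne (m + sf)).choose), ?_, ?_⟩
    · intro m m' hmm'
      exact hBmono m m' _ (hmemB m) _ (hmemB m') hmm'
    · intro x
      have heq2 : (⟨((((idx x - sf : Fin k)) : ℕ) + s') % k,
          Nat.mod_lt _ (idx x - sf).pos⟩ : Fin k) = (idx x - sf) + sf := hBA sf (idx x - sf)
      have hxmem : x ∈ A ⟨((((idx x - sf : Fin k)) : ℕ) + s') % k,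
          Nat.mod_lt _ (idx x - sf).pos⟩ := by
        rw [heq2, sub_add_cancel]
        exact hmem x
      exact ((hBfib (idx x - sf) (idx x - sf) x hxmem _ (hmemB (idx x - sf))).mpr rfl)
  -- forward
  have hfwd : ∀ a : Fin n → Fin n, IsParkingFunction a → IsOfType a A →
      (∃ s, StrictMono fun m => a (pick (m + s))) ∧
      (∀ i : ℕ, i < n →
        i + 1 ≤ ∑ j ∈ univ.filter (fun j => ((a (pick j) : ℕ)) ≤ i), (A j).card) := by
    intro a hpf hot
    obtain ⟨s, v, hv, hax⟩ := hdecomp a hot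
    have hg : ∀ j, a (pick j) = v (j - s) := by
      intro j; rw [hax, hidxpick]
    have hgx : ∀ x, a x = a (pick (idx x)) := by
      intro x; rw [hg, hax]
    constructor
    · refine ⟨s, ?_⟩
      have : (fun m => a (pick (m + s))) = v := by
        funext m; rw [hg, add_sub_cancel_right]
      rw [this]; exact hv
    · intro i hi
      have hpfi := hpf ⟨i, hi⟩
      have heq : univ.filter (fun x => a x ≤ (⟨i, hi⟩ : Fin n))
          = univ.filter (fun x => (a x : ℕ) ≤ i) := by
        ext x
        simp only [mem_filter, mem_univ, true_and]
        rw [Fin.le_def]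
      rw [heq] at hpfi
      exact hpfi.trans (le_of_eq (hcount (fun j => a (pick j)) a hgx i))
  -- backward
  have hbwd : ∀ g : Fin k → Fin n, (∃ s, StrictMono fun m => g (m + s)) →
      (∀ i : ℕ, i < n → i + 1 ≤ ∑ j ∈ univ.filter (fun j => ((g j : ℕ)) ≤ i), (A j).card) →
      IsParkingFunction (fun x => g (idx x)) ∧ IsOfType (fun x => g (idx x)) A := by
    intro g ⟨s, hv⟩ hpk
    constructor
    · intro i
      show (i : ℕ) + 1 ≤ (univ.filter (fun x => g (idx x) ≤ i)).card
      have heq : univ.filter (fun x => g (idx x) ≤ i)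
          = univ.filter (fun x => ((fun y => g (idx y)) x : ℕ) ≤ (i : ℕ)) := by
        ext x; simp only [mem_filter, mem_univ, true_and, Fin.le_def]
      rw [heq, hcount g (fun y => g (idx y)) (fun x => rfl) (i : ℕ)]
      exact hpk (i : ℕ) i.isLt
    · refine ⟨(s : ℕ), s.isLt, ?_, ?_, ?_, ?_⟩
      · intro j
        show (A ⟨((j : ℕ) + (s : ℕ)) % k, Nat.mod_lt _ j.pos⟩).Nonempty
        rw [hBA s j]
        exact hne (j + s)
      · intro x
        refine ⟨idx x - s, ?_⟩
        show x ∈ A ⟨(((idx x - s : Fin k) : ℕ) + (s : ℕ)) % k, Nat.mod_lt _ (idx x - s).pos⟩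
        rw [hBA s (idx x - s), sub_add_cancel]
        exact hmem x
      · intro j j' x hx y hy
        have hx' : x ∈ A (j + s) := by rw [← hBA s j]; exact hx
        have hy' : y ∈ A (j' + s) := by rw [← hBA s j']; exact hy
        have h1 : idx x = j + s := huniq _ _ hx'
        have h2 : idx y = j' + s := huniq _ _ hy'
        show g (idx x) = g (idx y) ↔ j = j'
        rw [h1, h2]
        exact ⟨fun h => hv.injective h, fun h => by rw [h]⟩
      · intro j j' x hx y hy hjj'
        have hx' : x ∈ A (j + s) := by rw [← hBA s j]; exact hx
        have hy' : y ∈ A (j' + s) := by rw [← hBA s j']; exact hy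
        have h1 : idx x = j + s := huniq _ _ hx'
        have h2 : idx y = j' + s := huniq _ _ hy'
        show g (idx x) < g (idx y)
        rw [h1, h2]
        exact hv hjj'
  -- E1 : card of words = card of g-space
  have e1 : Nat.card {a : Fin n → Fin n // IsParkingFunction a ∧ IsOfType a A}
      = Nat.card {g : Fin k → Fin n // (∃ s, StrictMono fun m => g (m + s)) ∧
          (∀ i : ℕ, i < n →
            i + 1 ≤ ∑ j ∈ univ.filter (fun j => ((g j : ℕ)) ≤ i), (A j).card)} := by
    have hf : ∀ a : {a : Fin n → Fin n // IsParkingFunction a ∧ IsOfType a A},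
        (∃ s, StrictMono fun m => (fun j => a.1 (pick j)) (m + s)) ∧
        (∀ i : ℕ, i < n →
          i + 1 ≤ ∑ j ∈ univ.filter (fun j => (((fun j => a.1 (pick j)) j : ℕ)) ≤ i),
            (A j).card) := fun a => hfwd a.1 a.2.1 a.2.2
    apply Nat.card_eq_of_bijective (f := fun a => ⟨fun j => a.1 (pick j), hf a⟩)
    constructor
    · rintro ⟨a, ha⟩ ⟨b, hb⟩ hab
      simp only [Subtype.mk.injEq] at hab
      apply Subtype.ext
      funext x
      obtain ⟨s, v, hv, hax⟩ := hdecomp a ha.2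
      obtain ⟨s', v', hv', hbx⟩ := hdecomp b hb.2
      have h1 : a (pick (idx x)) = b (pick (idx x)) := congrFun hab (idx x)
      have ha2 : a x = a (pick (idx x)) := by rw [hax, hax, hidxpick]
      have hb2 : b x = b (pick (idx x)) := by rw [hbx, hbx, hidxpick]
      show a x = b x
      rw [ha2, hb2, h1]
    · rintro ⟨g, hcm, hpk⟩
      obtain ⟨hpf, hot⟩ := hbwd g hcm hpk
      refine ⟨⟨fun x => g (idx x), hpf, hot⟩, ?_⟩
      apply Subtype.ext
      funext j
      show g (idx (pick j)) = g j
      rw [hidxpick]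
  rw [e1]
  -- E2 : g-space = D-space
  have e2 : Nat.card {g : Fin k → Fin n // (∃ s, StrictMono fun m => g (m + s)) ∧
          (∀ i : ℕ, i < n →
            i + 1 ≤ ∑ j ∈ univ.filter (fun j => ((g j : ℕ)) ≤ i), (A j).card)}
      = Nat.card {d : Fin k → ℕ // StrictMono d ∧ d 0 = 0 ∧ ∀ j, d j ≤ n} := by
    clear e1 hbwd hfwd hdecomp hcount hBA huniq hmem hidxpick hpickmem hexcov hcov hne
    clear idx pick
    have hdprop : ∀ g : {g : Fin k → Fin n // (∃ s, StrictMono fun m => g (m + s)) ∧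
          (∀ i : ℕ, i < n →
            i + 1 ≤ ∑ j ∈ univ.filter (fun j => ((g j : ℕ)) ≤ i), (A j).card)},
        StrictMono (fun j => ((g.1 j : ℕ) + (n+1) - (g.1 0 : ℕ)) % (n+1)) ∧
        (fun j => ((g.1 j : ℕ) + (n+1) - (g.1 0 : ℕ)) % (n+1)) 0 = 0 ∧
        ∀ j, (fun j => ((g.1 j : ℕ) + (n+1) - (g.1 0 : ℕ)) % (n+1)) j ≤ n := by
      rintro ⟨g, ⟨s, hs⟩, hpk⟩
      refine ⟨PFAux.sm_diff g s hs, ?_, ?_⟩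
      · show ((g 0 : ℕ) + (n+1) - (g 0 : ℕ)) % (n+1) = 0
        have h9 : ((g 0 : ℕ) + (n+1) - (g 0 : ℕ)) = n+1 := by omega
        rw [h9, Nat.mod_self]
      · intro j
        exact Nat.le_of_lt_succ (Nat.mod_lt _ (by omega))
    apply Nat.card_eq_of_bijective
      (f := fun g => ⟨fun j => ((g.1 j : ℕ) + (n+1) - (g.1 0 : ℕ)) % (n+1), hdprop g⟩)
    have hGoodOf : ∀ g : Fin k → Fin n,
        (∀ i : ℕ, i < n →
            i + 1 ≤ ∑ j ∈ univ.filter (fun j => ((g j : ℕ)) ≤ i), (A j).card) →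
        PFAux.Good (n := n) (fun j => ((g j : ℕ) + (n+1) - (g 0 : ℕ)) % (n+1))
          (fun j => (A j).card) ((g 0 : ℕ)) := by
      intro g hpk i hi
      have heq : (univ.filter (fun j : Fin k =>
            ((((g j : ℕ) + (n+1) - (g 0 : ℕ)) % (n+1)) + (g 0 : ℕ)) % (n+1) ≤ i))
          = univ.filter (fun j => (g j : ℕ) ≤ i) := by
        ext j
        simp only [mem_filter, mem_univ, true_and]
        rw [PFAux.diff_recover g j]
      show i + 1 ≤ ∑ j ∈ univ.filter (fun j =>
          ((((g j : ℕ) + (n+1) - (g 0 : ℕ)) % (n+1)) + (g 0 : ℕ)) % (n+1) ≤ i), (A j).card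
      rw [heq]
      exact hpk i hi
    constructor
    · rintro ⟨g, hg⟩ ⟨g', hg'⟩ hgg'
      simp only [Subtype.mk.injEq] at hgg'
      have hdn : ∀ j : Fin k, ((g j : ℕ) + (n+1) - (g 0 : ℕ)) % (n+1) ≤ n :=
        fun j => Nat.le_of_lt_succ (Nat.mod_lt _ (by omega))
      obtain ⟨c₀, ⟨hc₀, hGc₀⟩, huc⟩ := PFAux.cycle_lemma (n := n)
        (fun j => ((g j : ℕ) + (n+1) - (g 0 : ℕ)) % (n+1)) (fun j => (A j).card) hdn hsum
      have hA1 : (g 0 : ℕ) = c₀ := by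
        apply huc
        exact ⟨Nat.le_of_lt_succ ((g 0).isLt.trans (by omega)), hGoodOf g hg.2⟩
      have hA2 : (g' 0 : ℕ) = c₀ := by
        apply huc
        refine ⟨Nat.le_of_lt_succ ((g' 0).isLt.trans (by omega)), ?_⟩
        have h5 := hGoodOf g' hg'.2
        rw [← hgg'] at h5
        exact h5
      apply Subtype.ext
      funext j
      apply Fin.ext
      have r1 := PFAux.diff_recover g j
      have r2 := PFAux.diff_recover g' j
      rw [hA1] at r1
      rw [hA2] at r2
      rw [← r1, ← r2]
      have h12 : ((g j : ℕ) + (n+1) - (g 0 : ℕ)) % (n+1)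
          = ((g' j : ℕ) + (n+1) - (g' 0 : ℕ)) % (n+1) := congrFun hgg' j
      rw [hA1] at h12
      rw [hA2] at h12
      rw [← r1, ← r2, h12]
    · rintro ⟨d, hdm, hd0, hdn⟩
      obtain ⟨c, ⟨hc, hGood⟩, -⟩ := PFAux.cycle_lemma (n := n) d (fun j => (A j).card) hdn hsum
      have hlt : ∀ j, (d j + c) % (n+1) < n :=
        PFAux.good_lt d (fun j => (A j).card) hℓ1 hsum hn hGood
      have hgval : ∀ j : Fin k,
          (((fun j => (⟨(d j + c) % (n+1), hlt j⟩ : Fin n)) j : Fin n) : ℕ)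
            = (d j + c) % (n+1) := fun j => rfl
      have hcm : ∃ s, StrictMono fun m =>
          (fun j => (⟨(d j + c) % (n+1), hlt j⟩ : Fin n)) (m + s) :=
        PFAux.cycMono_of_shift d hdm hd0 hdn hc _ hgval
      have hpk : ∀ i : ℕ, i < n →
          i + 1 ≤ ∑ j ∈ univ.filter (fun j =>
            (((fun j => (⟨(d j + c) % (n+1), hlt j⟩ : Fin n)) j : Fin n) : ℕ) ≤ i),
            (A j).card := by
        intro i hi
        exact hGood i hi
      refine ⟨⟨fun j => (⟨(d j + c) % (n+1), hlt j⟩ : Fin n), hcm, hpk⟩, ?_⟩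
      apply Subtype.ext
      funext j
      show (((d j + c) % (n+1)) + (n+1) - ((d 0 + c) % (n+1))) % (n+1) = d j
      have hg0 : (d 0 + c) % (n+1) = c := by
        rw [hd0, Nat.zero_add, Nat.mod_eq_of_lt (by omega)]
      rw [hg0]
      exact PFAux.shift_diff (hdn j) hc
  rw [e2]
  -- E3 : D-space = subsets
  have e3 : Nat.card {d : Fin k → ℕ // StrictMono d ∧ d 0 = 0 ∧ ∀ j, d j ≤ n}
      = Nat.card {X : Finset (Fin n) // X.card = k - 1} := by
    clear e2 e1 hbwd hfwd hdecomp hcount hBA huniq hmem hidxpick hpickmem hexcov hcov hne hsum hℓ1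
    clear idx pick A
    have hzero : (0 : Fin k) = ⟨0, hk0⟩ := by
      apply Fin.ext; simp
    have himg : ∀ d : {d : Fin k → ℕ // StrictMono d ∧ d 0 = 0 ∧ ∀ j, d j ≤ n},
        ((univ \ {0} : Finset (Fin k)).image
          (fun j => (⟨d.1 j - 1, PFAux.pred_lt hn (d.2.2.2 j)⟩ : Fin n))).card = k - 1 := by
      rintro ⟨d, hdm, hd0, hdn⟩
      rw [Finset.card_image_of_injOn, Finset.card_sdiff_of_subset (Finset.subset_univ _)]
      · simp
      · intro j hj j' hj' hjj'
        simp only [Finset.coe_sdiff, Set.mem_diff, Finset.coe_univ, Set.mem_univ, true_and,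
          Finset.coe_singleton, Set.mem_singleton_iff] at hj hj'
        have hj1 : 1 ≤ d j := by
          have h6 : d 0 < d j := hdm (PFAux.fin_pos_of_ne hj)
          omega
        have hj'1 : 1 ≤ d j' := by
          have h6 : d 0 < d j' := hdm (PFAux.fin_pos_of_ne hj')
          omega
        have h7 : d j = d j' := by
          have h8 := congrArg Fin.val hjj'
          simp only at h8
          omega
        exact hdm.injective h7
    have hEimg : ∀ d : {d : Fin k → ℕ // StrictMono d ∧ d 0 = 0 ∧ ∀ j, d j ≤ n},
        insert 0 (Finset.image (fun x : Fin n => (x:ℕ)+1)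
          ((univ \ {0} : Finset (Fin k)).image
            (fun j => (⟨d.1 j - 1, PFAux.pred_lt hn (d.2.2.2 j)⟩ : Fin n))))
          = Finset.image d.1 univ := by
      rintro ⟨d, hdm, hd0, hdn⟩
      show insert 0 (Finset.image (fun x : Fin n => (x:ℕ)+1)
          ((univ \ {0} : Finset (Fin k)).image
            (fun j => (⟨d j - 1, PFAux.pred_lt hn (hdn j)⟩ : Fin n))))
          = Finset.image d univ
      ext y
      constructor
      · intro hy
        rcases Finset.mem_insert.mp hy with rfl | hy'
        · exact Finset.mem_image.mpr ⟨0, mem_univ 0, hd0⟩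
        · obtain ⟨x, hx, rfl⟩ := Finset.mem_image.mp hy'
          obtain ⟨j, hj, rfl⟩ := Finset.mem_image.mp hx
          have hj0 : j ≠ 0 := (Finset.mem_sdiff.mp hj).2 ∘ Finset.mem_singleton.mpr
          have hj1 : 1 ≤ d j := by
            have h6 : d 0 < d j := hdm (PFAux.fin_pos_of_ne hj0)
            omega
          refine Finset.mem_image.mpr ⟨j, mem_univ j, ?_⟩
          show d j = (d j - 1) + 1
          omega
      · intro hy
        obtain ⟨j, -, rfl⟩ := Finset.mem_image.mp hy
        by_cases hj : j = 0
        · exact Finset.mem_insert.mpr (Or.inl (by rw [hj, hd0]))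
        · have hj1 : 1 ≤ d j := by
            have h6 : d 0 < d j := hdm (PFAux.fin_pos_of_ne hj)
            omega
          refine Finset.mem_insert.mpr (Or.inr (Finset.mem_image.mpr
            ⟨⟨d j - 1, PFAux.pred_lt hn (hdn j)⟩, Finset.mem_image.mpr
              ⟨j, Finset.mem_sdiff.mpr ⟨mem_univ _, fun h => hj (Finset.mem_singleton.mp h)⟩,
                rfl⟩, ?_⟩))
          show (d j - 1) + 1 = d j
          omega
    apply Nat.card_eq_of_bijective
      (f := fun d => ⟨(univ \ {0} : Finset (Fin k)).image
          (fun j => (⟨d.1 j - 1, PFAux.pred_lt hn (d.2.2.2 j)⟩ : Fin n)), himg d⟩)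
    constructor
    · rintro ⟨d, hdm, hd0, hdn⟩ ⟨d', hdm', hd0', hdn'⟩ hdd'
      simp only [Subtype.mk.injEq] at hdd'
      apply Subtype.ext
      have e_d := hEimg ⟨d, hdm, hd0, hdn⟩
      have e_d' := hEimg ⟨d', hdm', hd0', hdn'⟩
      have h1 : Finset.image d univ = Finset.image d' univ :=
        e_d.symm.trans ((congrArg
          (fun S => insert 0 (Finset.image (fun x : Fin n => (x:ℕ)+1) S)) hdd').trans e_d')
      have hcard : (Finset.image d univ).card = k := by
        rw [Finset.card_image_of_injective _ hdm.injective, Finset.card_univ, Fintype.card_fin]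
      have hu1 : d = ⇑((Finset.image d univ).orderEmbOfFin hcard) :=
        Finset.orderEmbOfFin_unique hcard (fun x => Finset.mem_image_of_mem d (mem_univ x)) hdm
      have hcard' : (Finset.image d univ).card = k := hcard
      have hu2 : d' = ⇑((Finset.image d univ).orderEmbOfFin hcard) := by
        apply Finset.orderEmbOfFin_unique hcard _ hdm'
        intro x
        rw [h1]
        exact Finset.mem_image_of_mem d' (mem_univ x)
      exact hu1.trans hu2.symm
    · rintro ⟨X, hX⟩
      have hinj1 : Function.Injective (fun x : Fin n => (x:ℕ)+1) := by
        intro a b h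
        have h' : (a:ℕ)+1 = (b:ℕ)+1 := h
        apply Fin.ext
        omega
      have h0E : (0:ℕ) ∉ X.image (fun x : Fin n => (x:ℕ)+1) := by
        simp only [Finset.mem_image, not_exists]
        rintro x ⟨-, h⟩
        have h' : (x:ℕ)+1 = 0 := h
        omega
      have hE : (insert 0 (X.image (fun x : Fin n => (x:ℕ)+1))).card = k := by
        rw [Finset.card_insert_of_notMem h0E, Finset.card_image_of_injective _ hinj1, hX]
        omega
      set E := insert 0 (X.image (fun x : Fin n => (x:ℕ)+1)) with hEdef
      set d : Fin k → ℕ := ⇑(E.orderEmbOfFin hE) with hddef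
      have hdm : StrictMono d := (E.orderEmbOfFin hE).strictMono
      have hdmemE : ∀ j, d j ∈ E := fun j => Finset.orderEmbOfFin_mem E hE j
      have hd0 : d 0 = 0 := by
        have h9 : d ⟨0, hk0⟩ = E.min' ⟨0, Finset.mem_insert_self _ _⟩ :=
          Finset.orderEmbOfFin_zero hE hk0
        have h10 : E.min' ⟨0, Finset.mem_insert_self _ _⟩ ≤ 0 :=
          Finset.min'_le E 0 (Finset.mem_insert_self _ _)
        have h11 : d 0 = d ⟨0, hk0⟩ := congrArg d hzero
        omega
      have hdn : ∀ j, d j ≤ n := by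
        intro j
        have h9 := hdmemE j
        rw [hEdef] at h9
        rcases Finset.mem_insert.mp h9 with h | h
        · omega
        · obtain ⟨x, -, hxd⟩ := Finset.mem_image.mp h
          have h12 : (x:ℕ)+1 = d j := hxd
          have := x.isLt
          omega
      have hrange : ∀ y, y ∈ E → ∃ j, d j = y := by
        intro y hy
        have h9 : (y : ℕ) ∈ Set.range d := by
          rw [hddef, Finset.range_orderEmbOfFin]
          exact hy
        exact h9
      refine ⟨⟨d, hdm, hd0, hdn⟩, ?_⟩
      apply Subtype.ext
      show Finset.image _ _ = X
      ext x
      simp only [Finset.mem_image, Finset.mem_sdiff, mem_univ, true_and, Finset.mem_singleton]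
      constructor
      · rintro ⟨j, hj, rfl⟩
        have hj1 : 1 ≤ d j := by
          have h6 : d 0 < d j := hdm (PFAux.fin_pos_of_ne hj)
          omega
        have h9 := hdmemE j
        rw [hEdef] at h9
        rcases Finset.mem_insert.mp h9 with h | h
        · omega
        · obtain ⟨y, hy, hyd⟩ := Finset.mem_image.mp h
          have h11 : (⟨d j - 1, by have := hdn j; omega⟩ : Fin n) = y := by
            apply Fin.ext
            simp only []
            omega
          rw [h11]
          exact hy
      · intro hx
        obtain ⟨j, hjd⟩ := hrange ((x:ℕ)+1)
          (by rw [hEdef]; exact Finset.mem_insert_of_mem (Finset.mem_image_of_mem _ hx))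
        have hj0 : j ≠ 0 := by
          intro h
          rw [h, hd0] at hjd
          omega
        refine ⟨j, hj0, ?_⟩
        apply Fin.ext
        simp only []
        omega
  rw [e3]
  rw [Nat.card_eq_fintype_card, Fintype.card_finset_len]
  simp


end
end
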